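/- arXiv:math/0203167 — 3 statements merged into one kernel-verified Lean document; each statement's English description precedes it below -/
import Mathlib

section
/- Artin's representation of the braid group is faithful: for every n ≥ 2, the group homomorphism ρ : B_n → Aut(F_n) determined by sending each generator σ_i to the automorphism that maps x_i to x_i x_{i+1} x_i^{-1}, maps x_{i+1} to x_i, and fixes all other free generators, is injective. -/
/-- The defining relations of the braid group on `m + 1` strands (`m` generators
`σ_1, …, σ_m`, indexed here by `Fin m`): the commutation relations
`σ_i σ_j = σ_j σ_i` for `|i - j| > 1` and the braid relations
`σ_i σ_{i+1} σ_i = σ_{i+1} σ_i σ_{i+1}`. -/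
def braidRels (m : ℕ) : Set (FreeGroup (Fin m)) :=
  {r | (∃ i j : Fin m, (i : ℕ) + 1 < (j : ℕ) ∧
        r = FreeGroup.of i * FreeGroup.of j * (FreeGroup.of i)⁻¹ * (FreeGroup.of j)⁻¹) ∨
       (∃ i j : Fin m, (i : ℕ) + 1 = (j : ℕ) ∧
        r = FreeGroup.of i * FreeGroup.of j * FreeGroup.of i *
            (FreeGroup.of j * FreeGroup.of i * FreeGroup.of j)⁻¹)}

/-- The index in `Fin n` of the generator `x_i` of `F_n` acted on by `σ_i`
(the strand index `i`, `0`-based). -/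
def xL (n : ℕ) (i : Fin (n - 1)) : Fin n := ⟨i, by have := i.isLt; omega⟩

/-- The index in `Fin n` of the generator `x_{i+1}` of `F_n` acted on by `σ_i`. -/
def xR (n : ℕ) (i : Fin (n - 1)) : Fin n := ⟨(i : ℕ) + 1, by have := i.isLt; omega⟩

namespace ArtinAux

variable {n : ℕ}

abbrev B (n : ℕ) := PresentedGroup (braidRels n)

/-- the braid generators, as a function on ℕ (1 out of range). -/
noncomputable def s (n : ℕ) (i : ℕ) : B n :=
  if h : i < n then PresentedGroup.of ⟨i, h⟩ else 1

lemma rel_one {m : ℕ} {r : FreeGroup (Fin m)} (h : r ∈ braidRels m) :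
    PresentedGroup.mk (braidRels m) r = 1 := by
  rw [PresentedGroup.mk]
  exact (QuotientGroup.eq_one_iff r).2 (Subgroup.subset_normalClosure h)

lemma s_eq_of (i : ℕ) (h : i < n) : s n i = PresentedGroup.of ⟨i, h⟩ := dif_pos h

lemma s_eq_one (i : ℕ) (h : ¬ i < n) : s n i = 1 := dif_neg h

lemma braid_rel {i j : ℕ} (hij : i + 1 = j) (hj : j < n) :
    s n i * s n j * s n i = s n j * s n i * s n j := by
  have hi : i < n := by omega
  rw [s_eq_of i hi, s_eq_of j hj]
  have h : (FreeGroup.of (⟨i, hi⟩ : Fin n) * FreeGroup.of (⟨j, hj⟩ : Fin n) *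
      FreeGroup.of ⟨i, hi⟩ * (FreeGroup.of ⟨j, hj⟩ * FreeGroup.of ⟨i, hi⟩ *
      FreeGroup.of ⟨j, hj⟩)⁻¹) ∈ braidRels n := Or.inr ⟨⟨i, hi⟩, ⟨j, hj⟩, hij, rfl⟩
  have := rel_one h
  simp only [map_mul, map_inv] at this
  have h2 := mul_inv_eq_one.1 this
  exact h2

lemma comm_rel {i j : ℕ} (hij : i + 2 ≤ j) : Commute (s n i) (s n j) := by
  by_cases hj : j < n
  · have hi : i < n := by omega
    rw [s_eq_of i hi, s_eq_of j hj]
    have h : (FreeGroup.of (⟨i, hi⟩ : Fin n) * FreeGroup.of (⟨j, hj⟩ : Fin n) *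
        (FreeGroup.of ⟨i, hi⟩)⁻¹ * (FreeGroup.of ⟨j, hj⟩)⁻¹) ∈ braidRels n :=
      Or.inl ⟨⟨i, hi⟩, ⟨j, hj⟩, by simpa using (show i + 1 < j by omega), rfl⟩
    have h0 := rel_one h
    simp only [map_mul, map_inv] at h0
    have h1 : PresentedGroup.of (rels := braidRels n) ⟨i, hi⟩ * PresentedGroup.of ⟨j, hj⟩ *
        (PresentedGroup.of ⟨i, hi⟩)⁻¹ * (PresentedGroup.of ⟨j, hj⟩)⁻¹ = 1 := h0
    have h2 := mul_inv_eq_one.1 h1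
    exact (mul_inv_eq_iff_eq_mul.1 h2)
  · rw [s_eq_one j hj]
    exact Commute.one_right _

section BraidIdent
variable {G : Type*} [Group G] {x y : G}

lemma braid_aux1 (b : x*y*x = y*x*y) : x*y*x⁻¹ = y⁻¹*x*y := by
  have h : y * (x*y*x⁻¹) = y * (y⁻¹*x*y) := by
    rw [← mul_assoc, ← mul_assoc, ← b]; group
  exact mul_left_cancel h

lemma braid_aux2 (b : x*y*x = y*x*y) : x*y⁻¹*x⁻¹ = y⁻¹*x⁻¹*y := by
  have h := braid_aux1 b
  have h2 : (x*y*x⁻¹)⁻¹ = (y⁻¹*x*y)⁻¹ := by rw [h]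
  calc x*y⁻¹*x⁻¹ = (x*y*x⁻¹)⁻¹ := by group
  _ = (y⁻¹*x*y)⁻¹ := h2
  _ = y⁻¹*x⁻¹*y := by group

lemma braid_A (b : x*y*x = y*x*y) : x*(y*y)*x⁻¹ = y⁻¹*(x*x)*y := by
  have h := braid_aux1 b
  calc x*(y*y)*x⁻¹ = (x*y*x⁻¹)*(x*y*x⁻¹) := by group
  _ = (y⁻¹*x*y)*(y⁻¹*x*y) := by rw [h]
  _ = y⁻¹*(x*x)*y := by group

lemma braid_C3 (b : x*y*x = y*x*y) : x*(y*(x*x)*y⁻¹)*x⁻¹ = y*y := by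
  calc x*(y*(x*x)*y⁻¹)*x⁻¹ = (x*y*x)*(x*y⁻¹*x⁻¹) := by group
  _ = (y*x*y)*(y⁻¹*x⁻¹*y) := by rw [b, braid_aux2 b]
  _ = y*y := by group

end BraidIdent

/-- The descending products `T j = σ_{n-1} σ_{n-2} ⋯ σ_j`. -/
noncomputable def T (n : ℕ) (j : ℕ) : B n :=
  if h : j < n then T n (j+1) * s n j else 1
termination_by n - j
decreasing_by omega

lemma T_ge {j : ℕ} (h : ¬ j < n) : T n j = 1 := by rw [T]; simp [h]

lemma T_succ {j : ℕ} (h : j < n) : T n j = T n (j+1) * s n j := by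
  conv_lhs => rw [T]
  simp [h]

lemma commT (k j : ℕ) (h : k + 2 ≤ j) : Commute (s n k) (T n j) := by
  by_cases hj : j < n
  · rw [T_succ hj]
    exact (commT k (j+1) (by omega)).mul_right (comm_rel (by omega))
  · rw [T_ge hj]; exact Commute.one_right _
termination_by n - j
decreasing_by omega

lemma T_shift (j i : ℕ) (h1 : j ≤ i) (h2 : i + 1 < n) :
    T n j * s n (i+1) = s n i * T n j := by
  rcases eq_or_lt_of_le h1 with rfl | hlt
  · have hi : j < n := by omega
    have hcm : Commute (s n j) (T n (j+2)) := commT j (j+2) (by omega)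
    rw [T_succ hi, T_succ h2]
    calc T n (j+2) * s n (j+1) * s n j * s n (j+1)
        = T n (j+2) * (s n (j+1) * s n j * s n (j+1)) := by group
      _ = T n (j+2) * (s n j * s n (j+1) * s n j) := by rw [← braid_rel rfl h2]
      _ = (T n (j+2) * s n j) * (s n (j+1) * s n j) := by group
      _ = (s n j * T n (j+2)) * (s n (j+1) * s n j) := by rw [← hcm.eq]
      _ = s n j * (T n (j+2) * s n (j+1) * s n j) := by group
  · have hj : j < n := by omega
    rw [T_succ hj]
    calc T n (j+1) * s n j * s n (i+1)
        = T n (j+1) * (s n j * s n (i+1)) := by group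
      _ = T n (j+1) * (s n (i+1) * s n j) := by rw [(comm_rel (by omega : j + 2 ≤ i + 1)).eq]
      _ = (T n (j+1) * s n (i+1)) * s n j := by group
      _ = (s n i * T n (j+1)) * s n j := by rw [T_shift (j+1) i (by omega) h2]
      _ = s n i * (T n (j+1) * s n j) := by group
termination_by i - j
decreasing_by omega

lemma T_shift_inv (j i : ℕ) (h1 : j ≤ i) (h2 : i + 1 < n) :
    s n (i+1) * (T n j)⁻¹ = (T n j)⁻¹ * s n i := by
  calc s n (i+1) * (T n j)⁻¹
      = (T n j)⁻¹ * (T n j * s n (i+1)) * (T n j)⁻¹ := by group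
    _ = (T n j)⁻¹ * (s n i * T n j) * (T n j)⁻¹ := by rw [T_shift j i h1 h2]
    _ = (T n j)⁻¹ * s n i := by group

/-- the band generators `a j = A_{j,n}`. -/
noncomputable def a (n : ℕ) (j : ℕ) : B n :=
  T n (j+1) * (s n j * s n j) * (T n (j+1))⁻¹

lemma C1 {i j : ℕ} (h : i + 2 ≤ j) : Commute (s n i) (a n j) := by
  unfold a
  exact ((commT i (j+1) (by omega)).mul_right
    ((comm_rel h).mul_right (comm_rel h))).mul_right (commT i (j+1) (by omega)).inv_right

lemma C2 {i j : ℕ} (h1 : j + 1 ≤ i) (h2 : i + 1 < n) : Commute (s n i) (a n j) := by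
  unfold a
  have hshift := T_shift (j+1) i (by omega) h2
  have hswap := T_shift_inv (j+1) i (by omega) h2
  have hc : Commute (s n (i+1)) (s n j * s n j) :=
    ((comm_rel (by omega : j + 2 ≤ i + 1)).symm).mul_right (comm_rel (by omega)).symm
  show s n i * _ = _ * s n i
  calc s n i * (T n (j+1) * (s n j * s n j) * (T n (j+1))⁻¹)
      = (s n i * T n (j+1)) * (s n j * s n j) * (T n (j+1))⁻¹ := by group
    _ = (T n (j+1) * s n (i+1)) * (s n j * s n j) * (T n (j+1))⁻¹ := by rw [← hshift]
    _ = T n (j+1) * (s n (i+1) * (s n j * s n j)) * (T n (j+1))⁻¹ := by group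
    _ = T n (j+1) * ((s n j * s n j) * s n (i+1)) * (T n (j+1))⁻¹ := by rw [hc.eq]
    _ = T n (j+1) * (s n j * s n j) * (s n (i+1) * (T n (j+1))⁻¹) := by group
    _ = T n (j+1) * (s n j * s n j) * ((T n (j+1))⁻¹ * s n i) := by rw [hswap]
    _ = T n (j+1) * (s n j * s n j) * (T n (j+1))⁻¹ * s n i := by group

lemma C3 {j : ℕ} (h : j + 1 < n) : s n j * a n j * (s n j)⁻¹ = a n (j+1) := by
  unfold a
  have hT : T n (j+1) = T n (j+2) * s n (j+1) := T_succ h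
  have hcomm : Commute (s n j) (T n (j+2)) := commT j (j+2) (by omega)
  have hswap : (T n (j+2))⁻¹ * (s n j)⁻¹ = (s n j)⁻¹ * (T n (j+2))⁻¹ :=
    (hcomm.inv_left.inv_right.symm).eq
  have hb := braid_rel (rfl : j + 1 = j + 1) h
  calc s n j * (T n (j+1) * (s n j * s n j) * (T n (j+1))⁻¹) * (s n j)⁻¹
      = (s n j * T n (j+2)) * (s n (j+1) * (s n j * s n j) * (s n (j+1))⁻¹)
          * ((T n (j+2))⁻¹ * (s n j)⁻¹) := by rw [hT]; group
    _ = (T n (j+2) * s n j) * (s n (j+1) * (s n j * s n j) * (s n (j+1))⁻¹)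
          * ((s n j)⁻¹ * (T n (j+2))⁻¹) := by rw [hcomm.eq, hswap]
    _ = T n (j+2) * (s n j * (s n (j+1) * (s n j * s n j) * (s n (j+1))⁻¹) * (s n j)⁻¹)
          * (T n (j+2))⁻¹ := by group
    _ = T n (j+2) * (s n (j+1) * s n (j+1)) * (T n (j+2))⁻¹ := by rw [braid_C3 hb]
    _ = T n (j+1+1) * (s n (j+1) * s n (j+1)) * (T n (j+1+1))⁻¹ := by norm_num

lemma C4 {j : ℕ} (h : j + 1 < n) :
    s n j * a n (j+1) * (s n j)⁻¹ = (a n (j+1))⁻¹ * a n j * a n (j+1) := by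
  unfold a
  have hcomm : Commute (s n j) (T n (j+2)) := commT j (j+2) (by omega)
  have hswap : (T n (j+2))⁻¹ * (s n j)⁻¹ = (s n j)⁻¹ * (T n (j+2))⁻¹ :=
    (hcomm.inv_left.inv_right.symm).eq
  have hA := braid_A (braid_rel (rfl : j + 1 = j + 1) h)
  have hT : T n (j+1) = T n (j+2) * s n (j+1) := T_succ h
  have key : s n j * (T n (j+1+1) * (s n (j+1) * s n (j+1)) * (T n (j+1+1))⁻¹) * (s n j)⁻¹
      = (T n (j+1+1) * (s n (j+1) * s n (j+1)) * (T n (j+1+1))⁻¹)⁻¹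
          * (T n (j+1) * (s n j * s n j) * (T n (j+1))⁻¹)
          * (T n (j+1+1) * (s n (j+1) * s n (j+1)) * (T n (j+1+1))⁻¹) := by
    have e1 : T n (j+1+1) = T n (j+2) := by norm_num
    rw [e1, hT]
    calc s n j * (T n (j+2) * (s n (j+1) * s n (j+1)) * (T n (j+2))⁻¹) * (s n j)⁻¹
        = (s n j * T n (j+2)) * (s n (j+1) * s n (j+1))
            * ((T n (j+2))⁻¹ * (s n j)⁻¹) := by group
      _ = (T n (j+2) * s n j) * (s n (j+1) * s n (j+1))
            * ((s n j)⁻¹ * (T n (j+2))⁻¹) := by rw [hcomm.eq, hswap]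
      _ = T n (j+2) * (s n j * (s n (j+1) * s n (j+1)) * (s n j)⁻¹) * (T n (j+2))⁻¹ := by
            group
      _ = T n (j+2) * ((s n (j+1))⁻¹ * (s n j * s n j) * s n (j+1)) * (T n (j+2))⁻¹ := by
            rw [hA]
      _ = (T n (j+2) * (s n (j+1) * s n (j+1)) * (T n (j+2))⁻¹)⁻¹
            * (T n (j+2) * s n (j+1) * (s n j * s n j) * (T n (j+2) * s n (j+1))⁻¹)
            * (T n (j+2) * (s n (j+1) * s n (j+1)) * (T n (j+2))⁻¹) := by group
  exact key

/-! ### The free group side -/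

/-- the free generators, as a function on ℕ. -/
noncomputable def X (n : ℕ) (k : ℕ) : FreeGroup (Fin (n+1)) :=
  if h : k < n+1 then FreeGroup.of ⟨k, h⟩ else 1

lemma X_eq_of (k : ℕ) (h : k < n+1) : X n k = FreeGroup.of ⟨k, h⟩ := dif_pos h

/-- products of consecutive generators `x_a x_{a+1} ⋯ x_{b-1}` -/
noncomputable def XP (n : ℕ) (a b : ℕ) : FreeGroup (Fin (n+1)) :=
  ((List.range' a (b - a)).map (X n)).prod

lemma XP_ge {a b : ℕ} (h : b ≤ a) : XP n a b = 1 := by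
  unfold XP
  rw [Nat.sub_eq_zero_of_le h]
  simp

lemma XP_peel {a b : ℕ} (h : a < b) : XP n a b = X n a * XP n (a+1) b := by
  unfold XP
  rw [show b - a = (b - (a+1)) + 1 by omega, List.range'_succ]
  simp

/-- `ρ` is the Artin representation (ℕ-indexed formulation). -/
structure IsArtin (n : ℕ) (ρ : B n →* MulAut (FreeGroup (Fin (n+1)))) : Prop where
  a1 : ∀ i < n, ρ (s n i) (X n i) = X n i * X n (i+1) * (X n i)⁻¹
  a2 : ∀ i < n, ρ (s n i) (X n (i+1)) = X n i
  a3 : ∀ i < n, ∀ k, k ≠ i → k ≠ i+1 → ρ (s n i) (X n k) = X n k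

section RhoAction

variable {ρ : B n →* MulAut (FreeGroup (Fin (n+1)))}

lemma rho_mul (ρ : B n →* MulAut (FreeGroup (Fin (n+1)))) (g h : B n)
    (w : FreeGroup (Fin (n+1))) : ρ (g * h) w = ρ g (ρ h w) := by
  rw [map_mul]; rfl

lemma IsArtin.a3' (hρ : IsArtin n ρ) (i k : ℕ) (h1 : k ≠ i) (h2 : k ≠ i+1) :
    ρ (s n i) (X n k) = X n k := by
  by_cases hi : i < n
  · exact hρ.a3 i hi k h1 h2
  · rw [s_eq_one i hi, map_one]; rfl

lemma rhoT_lt (hρ : IsArtin n ρ) (k m : ℕ) (h : m < k) : ρ (T n k) (X n m) = X n m := by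
  by_cases hk : k < n
  · rw [T_succ hk, rho_mul, hρ.a3 k hk m (by omega) (by omega),
      rhoT_lt hρ (k+1) m (by omega)]
  · rw [T_ge hk, map_one]; rfl
termination_by n - k
decreasing_by omega

lemma rhoT_mid (hρ : IsArtin n ρ) (k m : ℕ) (h1 : k ≤ m) (h2 : m + 1 ≤ n) :
    ρ (T n k) (X n (m+1)) = X n m := by
  have hk : k < n := by omega
  rw [T_succ hk, rho_mul]
  rcases eq_or_lt_of_le h1 with rfl | hlt
  · rw [hρ.a2 k hk, rhoT_lt hρ (k+1) k (by omega)]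
  · rw [hρ.a3 k hk (m+1) (by omega) (by omega), rhoT_mid hρ (k+1) m (by omega) h2]
termination_by n - k
decreasing_by omega

lemma rhoT_top (hρ : IsArtin n ρ) (k : ℕ) (hk : k ≤ n) :
    ρ (T n k) (X n k) = XP n k n * X n n * (XP n k n)⁻¹ := by
  by_cases hlt : k < n
  · rw [T_succ hlt, rho_mul, hρ.a1 k hlt]
    rw [map_mul, map_mul, map_inv]
    rw [rhoT_lt hρ (k+1) k (by omega), rhoT_top hρ (k+1) (by omega)]
    rw [XP_peel hlt]
    group
  · have hk' : k = n := by omega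
    subst hk'
    rw [T_ge hlt, map_one, XP_ge le_rfl]
    simp
termination_by n - k
decreasing_by omega

end RhoAction

/-! ### kappa : kill the top generator -/

noncomputable def X' (n : ℕ) (k : ℕ) : FreeGroup (Fin n) :=
  if h : k < n then FreeGroup.of ⟨k, h⟩ else 1

noncomputable def XP' (n : ℕ) (a b : ℕ) : FreeGroup (Fin n) :=
  ((List.range' a (b - a)).map (X' n)).prod

noncomputable def kap (n : ℕ) : FreeGroup (Fin (n+1)) →* FreeGroup (Fin n) :=
  FreeGroup.lift (fun k => X' n k.val)

lemma kap_X (k : ℕ) : kap n (X n k) = X' n k := by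
  by_cases h : k < n+1
  · rw [X_eq_of k h]
    exact FreeGroup.lift_apply_of
  · rw [show X n k = 1 from dif_neg h, map_one, show X' n k = 1 from dif_neg (by omega)]

lemma X'_top : X' n n = 1 := dif_neg (by omega)

lemma kap_X_top : kap n (X n n) = 1 := by
  rw [kap_X]; exact dif_neg (by omega)

lemma kap_XP (a b : ℕ) : kap n (XP n a b) = XP' n a b := by
  unfold XP XP'
  rw [map_list_prod, List.map_map]
  congr 1
  exact List.map_congr_left (fun x _ => kap_X x)

/-! ### the action of the band generators -/

section RhoA

variable {ρ : B n →* MulAut (FreeGroup (Fin (n+1)))}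

lemma rho_a_apply (j : ℕ) (w : FreeGroup (Fin (n+1))) :
    ρ (a n j) (ρ (T n (j+1)) w) = ρ (T n (j+1)) (ρ (s n j) (ρ (s n j) w)) := by
  rw [← rho_mul, ← rho_mul, ← rho_mul]
  congr 2
  unfold a
  group

lemma rho_fix_XP (hρ : IsArtin n ρ) (i c b : ℕ) (h : i + 2 ≤ c) :
    ρ (s n i) (XP n c b) = XP n c b := by
  by_cases hcb : c < b
  · rw [XP_peel hcb, map_mul, hρ.a3' i c (by omega) (by omega),
      rho_fix_XP hρ i (c+1) b (by omega)]
  · rw [XP_ge (by omega), map_one]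
termination_by b - c
decreasing_by omega

lemma rhoT_prod (hρ : IsArtin n ρ) (k c : ℕ) (h1 : k ≤ c) :
    ρ (T n k) (XP n (c+1) (n+1)) = XP n c n := by
  by_cases hc : c < n
  · rw [XP_peel (by omega), map_mul, rhoT_mid hρ k c h1 (by omega),
      rhoT_prod hρ k (c+1) (by omega), XP_peel hc]
  · rw [XP_ge (by omega), XP_ge (by omega), map_one]
termination_by n - c
decreasing_by omega

/-- the conjugating word for the action of `a j` on the top generator -/
noncomputable def Y (n : ℕ) (j : ℕ) : FreeGroup (Fin (n+1)) :=
  (XP n (j+1) n)⁻¹ * X n j * XP n (j+1) n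

lemma rho_a_top (hρ : IsArtin n ρ) (j : ℕ) (hj : j < n) :
    ρ (a n j) (X n n) = Y n j * X n n * (Y n j)⁻¹ := by
  have hw : ρ (T n (j+1)) ((XP n (j+2) (n+1))⁻¹ * X n (j+1) * XP n (j+2) (n+1))
      = X n n := by
    rw [map_mul, map_mul, map_inv, rhoT_prod hρ (j+1) (j+1) le_rfl,
      rhoT_top hρ (j+1) (by omega)]
    group
  have i1 : ρ (s n j) ((XP n (j+2) (n+1))⁻¹ * X n (j+1) * XP n (j+2) (n+1))
      = (XP n (j+2) (n+1))⁻¹ * X n j * XP n (j+2) (n+1) := by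
    simp only [map_mul, map_inv]
    rw [rho_fix_XP hρ j (j+2) (n+1) (by omega), hρ.a2 j hj]
  have i2 : ρ (s n j) ((XP n (j+2) (n+1))⁻¹ * X n j * XP n (j+2) (n+1))
      = (XP n (j+2) (n+1))⁻¹ * (X n j * X n (j+1) * (X n j)⁻¹) * XP n (j+2) (n+1) := by
    simp only [map_mul, map_inv]
    rw [rho_fix_XP hρ j (j+2) (n+1) (by omega), hρ.a1 j hj]
  have h2 : ρ (s n j) (ρ (s n j)
      ((XP n (j+2) (n+1))⁻¹ * X n (j+1) * XP n (j+2) (n+1)))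
      = (XP n (j+2) (n+1))⁻¹ * (X n j * X n (j+1) * (X n j)⁻¹) * XP n (j+2) (n+1) := by
    rw [i1, i2]
  calc ρ (a n j) (X n n)
      = ρ (a n j) (ρ (T n (j+1)) ((XP n (j+2) (n+1))⁻¹ * X n (j+1) * XP n (j+2) (n+1)))
        := by rw [hw]
    _ = ρ (T n (j+1)) ((XP n (j+2) (n+1))⁻¹ * (X n j * X n (j+1) * (X n j)⁻¹)
          * XP n (j+2) (n+1)) := by rw [rho_a_apply, h2]
    _ = Y n j * X n n * (Y n j)⁻¹ := by
        rw [map_mul, map_mul, map_inv, map_mul, map_mul, map_inv,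
          rhoT_prod hρ (j+1) (j+1) le_rfl, rhoT_lt hρ (j+1) j (by omega),
          rhoT_top hρ (j+1) (by omega)]
        unfold Y
        group

lemma rho_a_fix (hρ : IsArtin n ρ) (j m : ℕ) (hj : j < n) (hm1 : m ≠ j) (hm2 : m ≠ n) :
    ρ (a n j) (X n m) = X n m := by
  rcases lt_or_ge m (j+1) with hlt | hge
  · -- m < j
    have hmj : m < j := by omega
    calc ρ (a n j) (X n m) = ρ (a n j) (ρ (T n (j+1)) (X n m)) := by
          rw [rhoT_lt hρ (j+1) m (by omega)]
      _ = ρ (T n (j+1)) (ρ (s n j) (ρ (s n j) (X n m))) := rho_a_apply j _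
      _ = X n m := by
          rw [hρ.a3' j m (by omega) (by omega), hρ.a3' j m (by omega) (by omega),
            rhoT_lt hρ (j+1) m (by omega)]
  · by_cases hmn : m ≤ n
    · -- j+1 ≤ m ≤ n, m ≠ n so m < n
      have hmn' : m + 1 ≤ n := by omega
      calc ρ (a n j) (X n m) = ρ (a n j) (ρ (T n (j+1)) (X n (m+1))) := by
            rw [rhoT_mid hρ (j+1) m hge hmn']
        _ = ρ (T n (j+1)) (ρ (s n j) (ρ (s n j) (X n (m+1)))) := rho_a_apply j _
        _ = X n m := by
            rw [hρ.a3' j (m+1) (by omega) (by omega), hρ.a3' j (m+1) (by omega) (by omega),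
              rhoT_mid hρ (j+1) m hge hmn']
    · rw [show X n m = 1 from dif_neg (by omega), map_one]

lemma rho_a_diag (hρ : IsArtin n ρ) (j : ℕ) (hj : j < n) :
    ρ (a n j) (X n j) =
      (X n j * (XP n (j+1) n * X n n * (XP n (j+1) n)⁻¹) * (X n j)⁻¹) * X n j
      * (X n j * (XP n (j+1) n * X n n * (XP n (j+1) n)⁻¹) * (X n j)⁻¹)⁻¹ := by
  have h2 : ρ (s n j) (ρ (s n j) (X n j))
      = (X n j * X n (j+1) * (X n j)⁻¹) * X n j * (X n j * X n (j+1) * (X n j)⁻¹)⁻¹ := by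
    rw [hρ.a1 j hj, map_mul, map_mul, map_inv, hρ.a1 j hj, hρ.a2 j hj]
  calc ρ (a n j) (X n j) = ρ (a n j) (ρ (T n (j+1)) (X n j)) := by
        rw [rhoT_lt hρ (j+1) j (by omega)]
    _ = ρ (T n (j+1)) (ρ (s n j) (ρ (s n j) (X n j))) := rho_a_apply j _
    _ = _ := by
        rw [h2]
        rw [map_mul, map_mul, map_inv, map_mul, map_mul, map_inv,
          rhoT_lt hρ (j+1) j (by omega), rhoT_top hρ (j+1) (by omega)]

lemma kap_rho_a (hρ : IsArtin n ρ) (j : ℕ) (hj : j < n) (w : FreeGroup (Fin (n+1))) :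
    kap n (ρ (a n j) w) = kap n w := by
  have key : (kap n).comp ((ρ (a n j)).toMonoidHom) = kap n := by
    apply FreeGroup.ext_hom
    intro b
    have hb : (b : ℕ) < n + 1 := b.isLt
    show kap n (ρ (a n j) (FreeGroup.of b)) = kap n (FreeGroup.of b)
    rw [← X_eq_of b hb]
    by_cases hbj : (b : ℕ) = j
    · rw [hbj, rho_a_diag hρ j hj]
      simp only [map_mul, map_inv, kap_X, kap_XP, X'_top]
      group
    · by_cases hbn : (b : ℕ) = n
      · rw [hbn, rho_a_top hρ j hj]
        unfold Y
        simp only [map_mul, map_inv, kap_X, kap_XP, X'_top]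
        group
      · rw [rho_a_fix hρ j b.val hj hbj hbn]
  calc kap n (ρ (a n j) w) = ((kap n).comp ((ρ (a n j)).toMonoidHom)) w := rfl
    _ = kap n w := by rw [key]

end RhoA

/-! ### the free subgroup on the band generators, and the conjugator bookkeeping -/

noncomputable def lam (n : ℕ) : FreeGroup (Fin n) →* B n :=
  FreeGroup.lift (fun j => a n j.val)

noncomputable def z (n : ℕ) (j : ℕ) : FreeGroup (Fin n) :=
  (XP' n (j+1) n)⁻¹ * X' n j * XP' n (j+1) n

noncomputable def zeta1 (n : ℕ) : FreeGroup (Fin n) →* FreeGroup (Fin n) :=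
  FreeGroup.lift (fun j => (z n j.val)⁻¹)

lemma pure_eq {m : ℕ} (j : Fin m) : (pure j : FreeGroup (Fin m)) = FreeGroup.of j := rfl

lemma lam_of (j : Fin n) : lam n (FreeGroup.of j) = a n j.val := FreeGroup.lift_apply_of

section LemL

variable {ρ : B n →* MulAut (FreeGroup (Fin (n+1)))}

lemma kap_rho_lam (hρ : IsArtin n ρ) (v : FreeGroup (Fin n))
    (w : FreeGroup (Fin (n+1))) : kap n (ρ (lam n v) w) = kap n w := by
  induction v using FreeGroup.induction_on generalizing w with
  | C1 => rw [map_one, map_one]; rfl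
  | of j =>
      rw [lam_of]
      exact kap_rho_a hρ j.val j.isLt w
  | inv_of j _ =>
      rw [map_inv, lam_of]
      have h1 : ρ (a n j.val) (ρ ((a n j.val)⁻¹) w) = w := by
        rw [← rho_mul, mul_inv_cancel, map_one]; rfl
      have h2 := kap_rho_a hρ j.val j.isLt (ρ ((a n j.val)⁻¹) w)
      rw [h1] at h2
      exact h2.symm
  | mul v1 v2 ih1 ih2 =>
      rw [map_mul, rho_mul, ih1, ih2]

lemma kap_Y (j : ℕ) : kap n (Y n j) = z n j := by
  unfold Y z
  simp only [map_mul, map_inv, kap_X, kap_XP]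

lemma zeta1_of (j : Fin n) : zeta1 n (FreeGroup.of j) = (z n j.val)⁻¹ :=
  FreeGroup.lift_apply_of

lemma lemL (hρ : IsArtin n ρ) (v : FreeGroup (Fin n)) :
    ∃ W, ρ (lam n v) (X n n) = W * X n n * W⁻¹ ∧ kap n W = zeta1 n v⁻¹ := by
  induction v using FreeGroup.induction_on with
  | C1 =>
      refine ⟨1, ?_, ?_⟩
      · have h0 : ρ (lam n 1) (X n n) = X n n := by
          rw [map_one, map_one]; rfl
        rw [h0]; group
      · rw [inv_one, map_one, map_one]
  | of j =>
      refine ⟨Y n j.val, ?_, ?_⟩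
      · rw [lam_of]
        exact rho_a_top hρ j.val j.isLt
      · rw [kap_Y, map_inv, zeta1_of, inv_inv]
  | inv_of j ih =>
      obtain ⟨W, hW, hk⟩ := ih
      refine ⟨(ρ ((lam n (FreeGroup.of j))⁻¹) W)⁻¹, ?_, ?_⟩
      · rw [map_inv]
        have h0 : ρ ((lam n (FreeGroup.of j))⁻¹) (ρ (lam n (FreeGroup.of j)) (X n n))
            = X n n := by
          rw [← rho_mul, inv_mul_cancel, map_one]; rfl
        rw [hW, map_mul, map_mul, map_inv (ρ ((lam n (FreeGroup.of j))⁻¹)) W] at h0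
        set u := ρ ((lam n (FreeGroup.of j))⁻¹) W with hu
        set v := ρ ((lam n (FreeGroup.of j))⁻¹) (X n n) with hv
        rw [← h0]
        group
      · rw [inv_inv, map_inv]
        have h3 : (lam n (FreeGroup.of j))⁻¹ = lam n ((FreeGroup.of j)⁻¹) :=
          (map_inv (lam n) _).symm
        rw [h3, kap_rho_lam hρ, hk, map_inv, inv_inv]
  | mul v1 v2 ih1 ih2 =>
      obtain ⟨W1, hW1, hk1⟩ := ih1
      obtain ⟨W2, hW2, hk2⟩ := ih2
      refine ⟨ρ (lam n v1) W2 * W1, ?_, ?_⟩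
      · rw [map_mul, rho_mul, hW2]
        simp only [map_mul, map_inv, hW1]
        group
      · rw [map_mul, kap_rho_lam hρ, hk1, hk2, mul_inv_rev, map_mul]

end LemL

/-! ### injectivity of `zeta1` -/

noncomputable def RP (n : ℕ) (j : ℕ) : FreeGroup (Fin n) :=
  (((List.range' (j+1) (n - (j+1))).map (X' n)).reverse).prod

lemma RP_ge {j : ℕ} (h : n ≤ j + 1) : RP n j = 1 := by
  unfold RP
  rw [Nat.sub_eq_zero_of_le h]
  simp

lemma RP_peel {j : ℕ} (h : j + 1 < n) : RP n j = RP n (j+1) * X' n (j+1) := by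
  unfold RP
  rw [show n - (j+1) = (n - (j+2)) + 1 by omega, List.range'_succ]
  simp

lemma XP'_ge {a b : ℕ} (h : b ≤ a) : XP' n a b = 1 := by
  unfold XP'
  rw [Nat.sub_eq_zero_of_le h]
  simp

lemma XP'_peel {a b : ℕ} (h : a < b) : XP' n a b = X' n a * XP' n (a+1) b := by
  unfold XP'
  rw [show b - a = (b - (a+1)) + 1 by omega, List.range'_succ]
  simp

noncomputable def xi (n : ℕ) : FreeGroup (Fin n) →* FreeGroup (Fin n) :=
  FreeGroup.lift (fun j : Fin n => RP n j.val * FreeGroup.of j * (RP n j.val)⁻¹)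

lemma xi_X' (k : ℕ) (h : k < n) : xi n (X' n k) = RP n k * X' n k * (RP n k)⁻¹ := by
  rw [show X' n k = FreeGroup.of ⟨k, h⟩ from dif_pos h]
  exact FreeGroup.lift_apply_of

lemma xi_XP' (j : ℕ) : xi n (XP' n (j+1) n) = RP n j := by
  by_cases h : j + 1 < n
  · rw [XP'_peel h, map_mul, xi_X' (j+1) h, xi_XP' (j+1), RP_peel h]
    group
  · rw [XP'_ge (by omega), RP_ge (by omega), map_one]
termination_by n - j
decreasing_by omega

lemma xi_z (j : ℕ) (h : j < n) : xi n (z n j) = X' n j := by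
  unfold z
  rw [map_mul, map_mul, map_inv, xi_XP', xi_X' j h]
  group

noncomputable def invMap (n : ℕ) : FreeGroup (Fin n) →* FreeGroup (Fin n) :=
  FreeGroup.lift (fun j : Fin n => (FreeGroup.of j)⁻¹)

lemma xi_zeta1 (v : FreeGroup (Fin n)) : xi n (zeta1 n v) = invMap n v := by
  have key : (xi n).comp (zeta1 n) = invMap n := by
    apply FreeGroup.ext_hom
    intro j
    show xi n (zeta1 n (FreeGroup.of j)) = invMap n (FreeGroup.of j)
    rw [zeta1_of, map_inv, xi_z j.val j.isLt, show invMap n (FreeGroup.of j)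
      = (FreeGroup.of j)⁻¹ from FreeGroup.lift_apply_of]
    rw [show X' n j.val = FreeGroup.of j from by
      rw [show X' n (j : ℕ) = FreeGroup.of ⟨j.val, j.isLt⟩ from dif_pos j.isLt]]
  calc xi n (zeta1 n v) = ((xi n).comp (zeta1 n)) v := rfl
    _ = invMap n v := by rw [key]

lemma invMap_invMap (v : FreeGroup (Fin n)) : invMap n (invMap n v) = v := by
  have key : (invMap n).comp (invMap n) = MonoidHom.id _ := by
    apply FreeGroup.ext_hom
    intro j
    show invMap n (invMap n (FreeGroup.of j)) = FreeGroup.of j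
    rw [show invMap n (FreeGroup.of j) = (FreeGroup.of j)⁻¹ from FreeGroup.lift_apply_of,
      map_inv, show invMap n (FreeGroup.of j) = (FreeGroup.of j)⁻¹ from FreeGroup.lift_apply_of,
      inv_inv]
  calc invMap n (invMap n v) = ((invMap n).comp (invMap n)) v := rfl
    _ = v := by rw [key]; rfl

lemma zeta1_eq_one {v : FreeGroup (Fin n)} (h : zeta1 n v = 1) : v = 1 := by
  have h1 : invMap n v = 1 := by rw [← xi_zeta1, h, map_one]
  have h2 := invMap_invMap (n := n) v
  rw [h1, map_one] at h2
  exact h2.symm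

/-! ### centralizer of a generator in a free group -/

section Centralizer

variable {α : Type*} [DecidableEq α]

open FreeGroup

lemma list_concat_eq_cons {a : α × Bool} {L : List (α × Bool)}
    (h : L ++ [a] = a :: L) : ∀ b ∈ L, b = a := by
  induction L with
  | nil => intro b hb; simp at hb
  | cons c L' ih =>
      simp only [List.cons_append, List.cons.injEq] at h
      intro b hb
      rcases List.mem_cons.1 hb with rfl | hb'
      · exact h.1
      · exact ih (by rw [h.2, h.1]) b hb'

lemma reduce_cons_self {p : α × Bool} {L : List (α × Bool)}
    (h : FreeGroup.reduce (p :: L) = p :: L) : FreeGroup.reduce L = L := by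
  have hlen : (FreeGroup.reduce L).length ≤ L.length := Red.length_le reduce.red
  rcases hR : FreeGroup.reduce L with _ | ⟨hd, tl⟩
  · rw [reduce.cons, hR] at h
    have h2 : [p] = p :: L := h
    injection h2 with _ hb
  · rw [reduce.cons, hR] at h
    have h2 : (if p.1 = hd.1 ∧ p.2 = !hd.2 then tl else p :: hd :: tl) = p :: L := h
    by_cases hc : p.1 = hd.1 ∧ p.2 = !hd.2
    · rw [if_pos hc] at h2
      have hl1 : tl.length = L.length + 1 := by rw [h2]; rfl
      rw [hR] at hlen
      simp at hlen
      omega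
    · rw [if_neg hc] at h2
      injection h2 with _ hb

lemma head_strip {x : FreeGroup α} {p : α × Bool} {L : List (α × Bool)}
    (h : x.toWord = p :: L) :
    x = FreeGroup.mk [p] * FreeGroup.mk L ∧ (FreeGroup.mk L).toWord = L := by
  constructor
  · rw [FreeGroup.mul_mk, List.singleton_append, ← h, FreeGroup.mk_toWord]
  · rw [FreeGroup.toWord_mk]
    apply reduce_cons_self (p := p)
    have h1 : FreeGroup.mk (p :: L) = x := by rw [← h, FreeGroup.mk_toWord]
    have h2 : FreeGroup.reduce (p :: L) = x.toWord := by
      rw [← FreeGroup.toWord_mk, h1]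
    rw [h2, h]

lemma cons_toWord (p : α × Bool) (x : FreeGroup α)
    (hhead : ∀ q ∈ x.toWord.head?, ¬(p.1 = q.1 ∧ p.2 = !q.2)) :
    (FreeGroup.mk [p] * x).toWord = p :: x.toWord := by
  conv_lhs => rw [← FreeGroup.mk_toWord (x := x)]
  rw [FreeGroup.mul_mk, List.singleton_append, FreeGroup.toWord_mk, reduce.cons,
    FreeGroup.reduce_toWord]
  rcases hW : x.toWord with _ | ⟨hd, tl⟩
  · rfl
  · have hno := hhead hd (by rw [hW]; rfl)
    show (if p.1 = hd.1 ∧ p.2 = !hd.2 then tl else p :: hd :: tl) = p :: hd :: tl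
    rw [if_neg hno]

lemma invRev_cons (p : α × Bool) (M : List (α × Bool)) :
    FreeGroup.invRev (p :: M) = FreeGroup.invRev M ++ [(p.1, !p.2)] := by
  unfold FreeGroup.invRev
  simp

lemma mk_single_true (t : α) : FreeGroup.mk [(t, true)] = FreeGroup.of t := rfl

lemma mk_single_false (t : α) : FreeGroup.mk [(t, false)] = (FreeGroup.of t)⁻¹ := by
  rw [← mk_single_true, FreeGroup.inv_mk]
  congr 1

lemma of_pow_e (t : α) (b : Bool) :
    FreeGroup.mk [(t, b)] = FreeGroup.of t ^ (if b then (1 : ℤ) else -1) := by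
  cases b
  · have h : (if (false : Bool) then (1 : ℤ) else -1) = -1 := by norm_num
    rw [h, zpow_neg, zpow_one, mk_single_false]
  · have h : (if (true : Bool) then (1 : ℤ) else -1) = 1 := by norm_num
    rw [h, zpow_one, mk_single_true]

lemma centralizer_of_aux (t : α) (N : ℕ) :
    ∀ x : FreeGroup α, x.toWord.length ≤ N →
      x * FreeGroup.of t = FreeGroup.of t * x → ∃ k : ℤ, x = FreeGroup.of t ^ k := by
  induction N with
  | zero =>
      intro x hlen _
      refine ⟨0, ?_⟩
      have h0 : x.toWord = [] := List.length_eq_zero_iff.1 (by omega)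
      rw [FreeGroup.toWord_eq_nil_iff.1 h0, zpow_zero]
  | succ N ih =>
      intro x hlen hcomm
      rcases hW : x.toWord with _ | ⟨⟨y, b⟩, L⟩
      · exact ⟨0, by rw [FreeGroup.toWord_eq_nil_iff.1 hW, zpow_zero]⟩
      by_cases hyt : y = t
      · -- strip the head letter
        rw [hyt] at hW
        obtain ⟨hx, hL⟩ := head_strip hW
        set e : ℤ := if b then 1 else -1 with he
        have hxe : x = FreeGroup.of t ^ e * FreeGroup.mk L := by
          rw [hx, of_pow_e]
        have hcomm' : FreeGroup.mk L * FreeGroup.of t = FreeGroup.of t * FreeGroup.mk L := by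
          have h1 : FreeGroup.of t ^ e * (FreeGroup.mk L * FreeGroup.of t)
              = FreeGroup.of t ^ e * (FreeGroup.of t * FreeGroup.mk L) := by
            rw [← mul_assoc, ← hxe, hcomm, hxe]
            group
          exact mul_left_cancel h1
        have hlen' : (FreeGroup.mk L).toWord.length ≤ N := by
          rw [hL]
          have h5 : x.toWord.length = L.length + 1 := by rw [hW]; rfl
          omega
        obtain ⟨k, hk⟩ := ih (FreeGroup.mk L) hlen' hcomm'
        exact ⟨e + k, by rw [hxe, hk, zpow_add]⟩
      · -- head letter is not t; look at the last letter via x⁻¹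
        rcases hWinv : x⁻¹.toWord with _ | ⟨⟨y', b'⟩, L'⟩
        · exfalso
          have h0 : x⁻¹ = 1 := FreeGroup.toWord_eq_nil_iff.1 hWinv
          have h1 : x = 1 := by rwa [inv_eq_one] at h0
          rw [h1, FreeGroup.toWord_one] at hW
          cases hW
        by_cases hyt' : y' = t
        · -- strip head of x⁻¹
          rw [hyt'] at hWinv
          obtain ⟨hx, hL⟩ := head_strip hWinv
          set e : ℤ := if b' then 1 else -1 with he
          have hxe : x⁻¹ = FreeGroup.of t ^ e * FreeGroup.mk L' := by
            rw [hx, of_pow_e]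
          have hcommi : x⁻¹ * FreeGroup.of t = FreeGroup.of t * x⁻¹ := by
            have h1 : x * (x⁻¹ * FreeGroup.of t * x) = x * (FreeGroup.of t * x⁻¹ * x) := by
              calc x * (x⁻¹ * FreeGroup.of t * x) = FreeGroup.of t * x := by group
                _ = x * FreeGroup.of t := hcomm.symm
                _ = x * (FreeGroup.of t * x⁻¹ * x) := by group
            exact mul_right_cancel (mul_left_cancel h1)
          have hcomm' : FreeGroup.mk L' * FreeGroup.of t
              = FreeGroup.of t * FreeGroup.mk L' := by
            have h1 : FreeGroup.of t ^ e * (FreeGroup.mk L' * FreeGroup.of t)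
                = FreeGroup.of t ^ e * (FreeGroup.of t * FreeGroup.mk L') := by
              rw [← mul_assoc, ← hxe, hcommi, hxe]
              group
            exact mul_left_cancel h1
          have hlen' : (FreeGroup.mk L').toWord.length ≤ N := by
            rw [hL]
            have h2 : x⁻¹.toWord.length = L'.length + 1 := by rw [hWinv]; rfl
            have h3 : x⁻¹.toWord.length = x.toWord.length := by
              rw [FreeGroup.toWord_inv, FreeGroup.invRev_length]
            omega
          obtain ⟨k, hk⟩ := ih (FreeGroup.mk L') hlen' hcomm'
          refine ⟨-(e + k), ?_⟩
          have h4 : x⁻¹ = FreeGroup.of t ^ (e + k) := by rw [hxe, hk, zpow_add]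
          rw [← inv_inv x, h4, ← zpow_neg]
        · -- neither end is t: derive a contradiction
          exfalso
          have htop : (FreeGroup.of t * x).toWord = (t, true) :: x.toWord := by
            rw [← mk_single_true]
            apply cons_toWord
            intro q hq
            rw [hW] at hq
            simp only [List.head?_cons, Option.mem_def, Option.some.injEq] at hq
            rw [← hq]
            exact fun hcon => hyt hcon.1.symm
          have hbot : (x * FreeGroup.of t).toWord = x.toWord ++ [(t, true)] := by
            have h1 : (x * FreeGroup.of t)⁻¹ = FreeGroup.mk [(t, false)] * x⁻¹ := by
              rw [mul_inv_rev, mk_single_false]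
            have h2 : (FreeGroup.mk [(t, false)] * x⁻¹).toWord
                = (t, false) :: x⁻¹.toWord := by
              apply cons_toWord
              intro q hq
              rw [hWinv] at hq
              simp only [List.head?_cons, Option.mem_def, Option.some.injEq] at hq
              rw [← hq]
              exact fun hcon => hyt' hcon.1.symm
            have h3 : (x * FreeGroup.of t).toWord
                = FreeGroup.invRev ((x * FreeGroup.of t)⁻¹).toWord := by
              rw [FreeGroup.toWord_inv, FreeGroup.invRev_invRev]
            rw [h3, h1, h2, invRev_cons, FreeGroup.toWord_inv, FreeGroup.invRev_invRev]
            simp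
          have heq : x.toWord ++ [(t, true)] = (t, true) :: x.toWord := by
            rw [← hbot, ← htop, hcomm]
          have hall := list_concat_eq_cons heq (y, b)
            (by rw [hW]; exact List.mem_cons_self)
          exact hyt (congrArg Prod.fst hall)

lemma centralizer_of {x : FreeGroup α} {t : α}
    (h : x * FreeGroup.of t = FreeGroup.of t * x) : ∃ k : ℤ, x = FreeGroup.of t ^ k :=
  centralizer_of_aux t x.toWord.length x le_rfl h

end Centralizer

/-! ### the subgroup H and the coset transversal -/

def SetH (n : ℕ) : Set (B n) :=
  {g | ∃ j < n, g = a n j} ∪ {g | ∃ i, i + 1 < n ∧ g = s n i}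

noncomputable def H (n : ℕ) : Subgroup (B n) := Subgroup.closure (SetH n)

lemma a_mem_H {j : ℕ} (hj : j < n) : a n j ∈ H n :=
  Subgroup.subset_closure (Or.inl ⟨j, hj, rfl⟩)

lemma s_mem_H {i : ℕ} (hi : i + 1 < n) : s n i ∈ H n :=
  Subgroup.subset_closure (Or.inr ⟨i, hi, rfl⟩)

noncomputable def eps (n : ℕ) : FreeGroup (Fin (n+1)) →* Multiplicative ℤ :=
  FreeGroup.lift (fun k => Multiplicative.ofAdd (if (k : ℕ) = n then (1 : ℤ) else 0))

lemma eps_X (k : ℕ) :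
    eps n (X n k) = Multiplicative.ofAdd (if k = n then (1 : ℤ) else 0) := by
  by_cases h : k < n + 1
  · rw [X_eq_of k h]
    exact FreeGroup.lift_apply_of
  · rw [show X n k = 1 from dif_neg h, map_one, if_neg (by omega)]
    rfl

lemma eps_conj (w v : FreeGroup (Fin (n+1))) : eps n (w * v * w⁻¹) = eps n v := by
  rw [map_mul, map_mul, map_inv, mul_comm (eps n w) (eps n v), mul_assoc,
    mul_inv_cancel, mul_one]

section EpsRho

variable {ρ : B n →* MulAut (FreeGroup (Fin (n+1)))}

lemma eps_rho_gen_a (hρ : IsArtin n ρ) {j : ℕ} (hj : j < n)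
    (w : FreeGroup (Fin (n+1))) : eps n (ρ (a n j) w) = eps n w := by
  have key : (eps n).comp ((ρ (a n j)).toMonoidHom) = eps n := by
    apply FreeGroup.ext_hom
    intro b
    show eps n (ρ (a n j) (FreeGroup.of b)) = eps n (FreeGroup.of b)
    rw [← X_eq_of b.val b.isLt]
    by_cases hbj : (b : ℕ) = j
    · rw [hbj, rho_a_diag hρ j hj, eps_conj]
    · by_cases hbn : (b : ℕ) = n
      · rw [hbn, rho_a_top hρ j hj, eps_conj]
      · rw [rho_a_fix hρ j b.val hj hbj hbn]
  calc eps n (ρ (a n j) w) = ((eps n).comp ((ρ (a n j)).toMonoidHom)) w := rfl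
    _ = eps n w := by rw [key]

lemma eps_rho_gen_s (hρ : IsArtin n ρ) {i : ℕ} (hi : i + 1 < n)
    (w : FreeGroup (Fin (n+1))) : eps n (ρ (s n i) w) = eps n w := by
  have key : (eps n).comp ((ρ (s n i)).toMonoidHom) = eps n := by
    apply FreeGroup.ext_hom
    intro b
    show eps n (ρ (s n i) (FreeGroup.of b)) = eps n (FreeGroup.of b)
    rw [← X_eq_of b.val b.isLt]
    by_cases hbi : (b : ℕ) = i
    · rw [hbi, hρ.a1 i (by omega), eps_X]
      have h1 : X n i * X n (i+1) * (X n i)⁻¹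
          = X n i * X n (i+1) * (X n i)⁻¹ := rfl
      rw [show X n i * X n (i+1) * (X n i)⁻¹
          = (X n i) * (X n (i+1)) * (X n i)⁻¹ from rfl]
      rw [eps_conj (X n i) (X n (i+1)), eps_X, if_neg (by omega), if_neg (by omega)]
    · by_cases hbi1 : (b : ℕ) = i + 1
      · rw [hbi1, hρ.a2 i (by omega), eps_X, eps_X, if_neg (by omega), if_neg (by omega)]
      · rw [hρ.a3' i b.val hbi hbi1]
  calc eps n (ρ (s n i) w) = ((eps n).comp ((ρ (s n i)).toMonoidHom)) w := rfl
    _ = eps n w := by rw [key]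

lemma eps_rho_H (hρ : IsArtin n ρ) {h : B n} (hh : h ∈ H n) :
    ∀ w, eps n (ρ h w) = eps n w := by
  induction hh using Subgroup.closure_induction with
  | mem g hg =>
      rcases hg with ⟨j, hj, rfl⟩ | ⟨i, hi, rfl⟩
      · exact eps_rho_gen_a hρ hj
      · exact eps_rho_gen_s hρ hi
  | one => intro w; rw [map_one]; rfl
  | mul g1 g2 _ _ ih1 ih2 => intro w; rw [rho_mul, ih1, ih2]
  | inv g _ ih =>
      intro w
      have h1 : ρ g (ρ g⁻¹ w) = w := by rw [← rho_mul, mul_inv_cancel, map_one]; rfl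
      have := ih (ρ g⁻¹ w)
      rw [h1] at this
      exact this.symm

end EpsRho

/-- every braid decomposes as (element of H) * (coset representative T j) -/
lemma trans_decomp (β : B n) : ∃ h ∈ H n, ∃ j ≤ n, β = h * T n j := by
  have hβ : β ∈ Subgroup.closure (Set.range (PresentedGroup.of :
      Fin n → B n)) := by
    rw [PresentedGroup.closure_range_of]
    trivial
  induction hβ using Subgroup.closure_induction_right with
  | one => exact ⟨1, one_mem _, n, le_rfl, by rw [T_ge (by omega), mul_one]⟩
  | mul_right x hx y hy ih =>
      obtain ⟨h, hH, j, hj, rfl⟩ := ih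
      obtain ⟨i, rfl⟩ := hy
      have hi : (i : ℕ) < n := i.isLt
      have hsi : PresentedGroup.of i = s n i.val := (s_eq_of i.val hi).symm
      rw [hsi, mul_assoc]
      rcases lt_trichotomy ((i : ℕ) + 1) j with hlt | heq | hgt
      · -- i + 2 ≤ j : s i commutes past T j
        refine ⟨h * s n i.val, mul_mem hH (s_mem_H (by omega)), j, hj, ?_⟩
        rw [← (commT i.val j (by omega)).eq, mul_assoc]
      · -- i + 1 = j : absorb into T
        refine ⟨h, hH, i.val, hi.le, ?_⟩
        congr 1
        rw [show T n i.val = T n (i.val+1) * s n i.val from T_succ hi, heq]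
      · -- j ≤ i
        rcases eq_or_lt_of_le (by omega : j ≤ (i : ℕ)) with heq2 | hlt2
        · -- i = j
          subst heq2
          refine ⟨h * a n i.val, mul_mem hH (a_mem_H hi), i.val + 1, by omega, ?_⟩
          have key : T n i.val * s n i.val = a n i.val * T n (i.val+1) := by
            unfold a
            rw [show T n i.val = T n (i.val+1) * s n i.val from T_succ hi]
            group
          rw [key, mul_assoc]
        · -- j + 1 ≤ i
          have hi1 : 1 ≤ (i : ℕ) := by omega
          refine ⟨h * s n (i.val - 1), mul_mem hH (s_mem_H (by omega)), j, hj, ?_⟩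
          have key : T n j * s n i.val = s n (i.val - 1) * T n j := by
            rw [show (i : ℕ) = (i.val - 1) + 1 by omega] at hi ⊢
            exact T_shift j (i.val - 1) (by omega) (by omega)
          rw [key, mul_assoc]
  | mul_inv_cancel x hx y hy ih =>
      obtain ⟨h, hH, j, hj, rfl⟩ := ih
      obtain ⟨i, rfl⟩ := hy
      have hi : (i : ℕ) < n := i.isLt
      have hsi : PresentedGroup.of i = s n i.val := (s_eq_of i.val hi).symm
      rw [hsi, mul_assoc]
      rcases lt_trichotomy ((i : ℕ) + 1) j with hlt | heq | hgt
      · refine ⟨h * (s n i.val)⁻¹, mul_mem hH (inv_mem (s_mem_H (by omega))), j, hj, ?_⟩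
        rw [← (commT i.val j (by omega)).inv_left.eq, mul_assoc]
      · -- i + 1 = j : T j * (s i)⁻¹ = (a i)⁻¹ * T i
        refine ⟨h * (a n i.val)⁻¹, mul_mem hH (inv_mem (a_mem_H hi)), i.val,
          hi.le, ?_⟩
        have key : T n j * (s n i.val)⁻¹ = (a n i.val)⁻¹ * T n i.val := by
          rw [← heq]
          unfold a
          rw [show T n i.val = T n (i.val+1) * s n i.val from T_succ hi]
          group
        rw [key, mul_assoc]
      · rcases eq_or_lt_of_le (by omega : j ≤ (i : ℕ)) with heq2 | hlt2
        · -- i = j : T j * (s j)⁻¹ = T (j+1)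
          subst heq2
          refine ⟨h, hH, i.val + 1, by omega, ?_⟩
          congr 1
          rw [show T n i.val = T n (i.val+1) * s n i.val from T_succ hi]
          group
        · have hi1 : 1 ≤ (i : ℕ) := by omega
          refine ⟨h * (s n (i.val - 1))⁻¹, mul_mem hH (inv_mem (s_mem_H (by omega))),
            j, hj, ?_⟩
          have key : T n j * (s n i.val)⁻¹ = (s n (i.val - 1))⁻¹ * T n j := by
            have h2 : T n j * s n i.val = s n (i.val - 1) * T n j := by
              rw [show (i : ℕ) = (i.val - 1) + 1 by omega] at hi ⊢
              exact T_shift j (i.val - 1) (by omega) (by omega)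
            calc T n j * (s n i.val)⁻¹
                = (s n (i.val-1))⁻¹ * (s n (i.val-1) * T n j) * (s n i.val)⁻¹ := by group
              _ = (s n (i.val-1))⁻¹ * (T n j * s n i.val) * (s n i.val)⁻¹ := by rw [h2]
              _ = (s n (i.val-1))⁻¹ * T n j := by group
          rw [key, mul_assoc]

section KerH

variable {ρ : B n →* MulAut (FreeGroup (Fin (n+1)))}

lemma ker_mem_H (hρ : IsArtin n ρ) {β : B n} (hβ : ρ β = 1) : β ∈ H n := by
  obtain ⟨h, hH, j, hj, rfl⟩ := trans_decomp β
  rcases eq_or_lt_of_le hj with rfl | hjn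
  · rw [T_ge (by omega), mul_one]
    exact hH
  · exfalso
    have hfix : ∀ w, ρ h (ρ (T n j) w) = w := by
      intro w
      rw [← rho_mul, hβ]
      rfl
    have h1 : eps n (X n j) = eps n (ρ (T n j) (X n j)) := by
      have h2 := eps_rho_H hρ hH (ρ (T n j) (X n j))
      rw [hfix] at h2
      exact h2
    rw [rhoT_top hρ j (by omega), eps_conj, eps_X, eps_X, if_neg (by omega),
      if_pos rfl] at h1
    have : (0 : ℤ) = 1 := Multiplicative.ofAdd.injective h1
    omega

end KerH

/-! ### decomposition of H as (band subgroup) * (lower braid subgroup) -/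

def SetS (n : ℕ) : Set (B n) := {g | ∃ i, i + 1 < n ∧ g = s n i}

noncomputable def Hs (n : ℕ) : Subgroup (B n) := Subgroup.closure (SetS n)

lemma conj_comm_both {G : Type*} [Group G] {x y : G} (h : Commute x y) :
    x * y * x⁻¹ = y ∧ x⁻¹ * y * x = y := by
  constructor
  · rw [mul_inv_eq_iff_eq_mul]
    exact h.eq
  · calc x⁻¹ * y * x = x⁻¹ * (y * x) := by group
      _ = x⁻¹ * (x * y) := by rw [← h.eq]
      _ = y := by group

lemma conj_gen {i j : ℕ} (hi : i + 1 < n) (hj : j < n) :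
    (∃ w, s n i * a n j * (s n i)⁻¹ = lam n w) ∧
    (∃ w, (s n i)⁻¹ * a n j * s n i = lam n w) := by
  rcases lt_trichotomy (i + 1) j with hlt | heq | hgt
  · -- i + 2 ≤ j
    have hc := C1 (n := n) (by omega : i + 2 ≤ j)
    exact ⟨⟨FreeGroup.of ⟨j, hj⟩, by rw [lam_of, (conj_comm_both hc).1]⟩,
      ⟨FreeGroup.of ⟨j, hj⟩, by rw [lam_of, (conj_comm_both hc).2]⟩⟩
  · -- j = i + 1
    subst heq
    constructor
    · refine ⟨(FreeGroup.of (⟨i+1, hj⟩ : Fin n))⁻¹ * FreeGroup.of ⟨i, by omega⟩ *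
        FreeGroup.of ⟨i+1, hj⟩, ?_⟩
      simp only [map_mul, map_inv, lam_of]
      exact C4 (by omega)
    · refine ⟨FreeGroup.of (⟨i, by omega⟩ : Fin n), ?_⟩
      rw [lam_of]
      have h3 := C3 (n := n) (show i + 1 < n by omega)
      rw [← h3]
      group
  · -- j ≤ i
    rcases eq_or_lt_of_le (by omega : j ≤ i) with heq2 | hlt2
    · -- i = j
      subst heq2
      constructor
      · exact ⟨FreeGroup.of ⟨j+1, by omega⟩, by rw [lam_of]; exact C3 (by omega)⟩
      · refine ⟨FreeGroup.of (⟨j, by omega⟩ : Fin n) * FreeGroup.of ⟨j+1, by omega⟩ *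
          (FreeGroup.of ⟨j, by omega⟩)⁻¹, ?_⟩
        have key : s n j * (a n j * a n (j+1) * (a n j)⁻¹) * (s n j)⁻¹ = a n j := by
          have e1 : s n j * (a n j * a n (j+1) * (a n j)⁻¹) * (s n j)⁻¹
              = (s n j * a n j * (s n j)⁻¹) * (s n j * a n (j+1) * (s n j)⁻¹)
                * (s n j * a n j * (s n j)⁻¹)⁻¹ := by group
          rw [e1, C3 (by omega), C4 (by omega)]
          group
        have key2 : (s n j)⁻¹ * a n j * s n j = a n j * a n (j+1) * (a n j)⁻¹ := by
          calc (s n j)⁻¹ * a n j * s n j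
              = (s n j)⁻¹ * (s n j * (a n j * a n (j+1) * (a n j)⁻¹) * (s n j)⁻¹)
                * s n j := by rw [key]
            _ = a n j * a n (j+1) * (a n j)⁻¹ := by group
        simp only [map_mul, map_inv, lam_of]
        exact key2
    · -- j + 1 ≤ i
      have hc := C2 (n := n) (by omega : j + 1 ≤ i) hi
      exact ⟨⟨FreeGroup.of ⟨j, hj⟩, by rw [lam_of, (conj_comm_both hc).1]⟩,
        ⟨FreeGroup.of ⟨j, hj⟩, by rw [lam_of, (conj_comm_both hc).2]⟩⟩

lemma conj_lam_single {i : ℕ} (hi : i + 1 < n) (g : B n)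
    (hg : ∀ j : Fin n, ∃ w, g * a n j.val * g⁻¹ = lam n w) (v : FreeGroup (Fin n)) :
    ∃ v', g * lam n v * g⁻¹ = lam n v' := by
  choose F hF using hg
  refine ⟨FreeGroup.lift F v, ?_⟩
  have key : ((MulAut.conj g).toMonoidHom).comp (lam n)
      = (lam n).comp (FreeGroup.lift F) := by
    apply FreeGroup.ext_hom
    intro j
    show MulAut.conj g (lam n (FreeGroup.of j)) = lam n (FreeGroup.lift F (FreeGroup.of j))
    rw [lam_of, FreeGroup.lift_apply_of, MulAut.conj_apply]
    exact hF j
  calc g * lam n v * g⁻¹ = MulAut.conj g (lam n v) := by rw [MulAut.conj_apply]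
    _ = (((MulAut.conj g).toMonoidHom).comp (lam n)) v := rfl
    _ = ((lam n).comp (FreeGroup.lift F)) v := by rw [key]
    _ = lam n (FreeGroup.lift F v) := rfl

lemma conj_Hs {c : B n} (hc : c ∈ Hs n) (v : FreeGroup (Fin n)) :
    (∃ v', c * lam n v * c⁻¹ = lam n v') ∧ (∃ v', c⁻¹ * lam n v * c = lam n v') := by
  induction hc using Subgroup.closure_induction generalizing v with
  | mem g hg =>
      obtain ⟨i, hi, rfl⟩ := hg
      constructor
      · exact conj_lam_single hi (s n i)
          (fun j => (conj_gen hi j.isLt).1) v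
      · have h2 := conj_lam_single hi ((s n i)⁻¹)
          (fun j => by rw [inv_inv]; exact (conj_gen hi j.isLt).2) v
        rwa [inv_inv] at h2
  | one =>
      refine ⟨⟨v, by group⟩, ⟨v, by group⟩⟩
  | mul g1 g2 _ _ ih1 ih2 =>
      constructor
      · obtain ⟨v1, hv1⟩ := (ih2 v).1
        obtain ⟨v2, hv2⟩ := (ih1 v1).1
        refine ⟨v2, ?_⟩
        calc g1 * g2 * lam n v * (g1 * g2)⁻¹
            = g1 * (g2 * lam n v * g2⁻¹) * g1⁻¹ := by group
          _ = g1 * lam n v1 * g1⁻¹ := by rw [hv1]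
          _ = lam n v2 := hv2
      · obtain ⟨v1, hv1⟩ := (ih1 v).2
        obtain ⟨v2, hv2⟩ := (ih2 v1).2
        refine ⟨v2, ?_⟩
        calc (g1 * g2)⁻¹ * lam n v * (g1 * g2)
            = g2⁻¹ * (g1⁻¹ * lam n v * g1) * g2 := by group
          _ = g2⁻¹ * lam n v1 * g2 := by rw [hv1]
          _ = lam n v2 := hv2
  | inv g _ ih =>
      constructor
      · obtain ⟨v', hv'⟩ := (ih v).2
        exact ⟨v', by rw [inv_inv]; exact hv'⟩
      · obtain ⟨v', hv'⟩ := (ih v).1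
        exact ⟨v', by rw [inv_inv]; exact hv'⟩

lemma decomp_H {β : B n} (hβ : β ∈ H n) :
    ∃ v, ∃ c ∈ Hs n, β = lam n v * c := by
  induction hβ using Subgroup.closure_induction with
  | mem g hg =>
      rcases hg with ⟨j, hj, rfl⟩ | ⟨i, hi, rfl⟩
      · exact ⟨FreeGroup.of ⟨j, hj⟩, 1, one_mem _, by rw [lam_of, mul_one]⟩
      · exact ⟨1, s n i, Subgroup.subset_closure ⟨i, hi, rfl⟩, by rw [map_one, one_mul]⟩
  | one => exact ⟨1, 1, one_mem _, by rw [map_one, one_mul]⟩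
  | mul g1 g2 _ _ ih1 ih2 =>
      obtain ⟨v, c, hc, rfl⟩ := ih1
      obtain ⟨v', c', hc', rfl⟩ := ih2
      obtain ⟨v'', hv''⟩ := (conj_Hs hc v').1
      refine ⟨v * v'', c * c', mul_mem hc hc', ?_⟩
      rw [map_mul, ← hv'']
      group
  | inv g _ ih =>
      obtain ⟨v, c, hc, rfl⟩ := ih
      obtain ⟨v'', hv''⟩ := (conj_Hs (inv_mem hc) (v⁻¹)).1
      refine ⟨v'', c⁻¹, inv_mem hc, ?_⟩
      rw [← hv'', map_inv]
      group

section FixTop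

variable {ρ : B n →* MulAut (FreeGroup (Fin (n+1)))}

lemma fixtop_Hs (hρ : IsArtin n ρ) {c : B n} (hc : c ∈ Hs n) :
    ρ c (X n n) = X n n ∧ ρ c⁻¹ (X n n) = X n n := by
  induction hc using Subgroup.closure_induction with
  | mem g hg =>
      obtain ⟨i, hi, rfl⟩ := hg
      have h1 : ρ (s n i) (X n n) = X n n := hρ.a3' i n (by omega) (by omega)
      refine ⟨h1, ?_⟩
      have h2 : ρ ((s n i)⁻¹) (ρ (s n i) (X n n)) = X n n := by
        rw [← rho_mul, inv_mul_cancel, map_one]; rfl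
      rwa [h1] at h2
  | one =>
      constructor
      · rw [map_one]; rfl
      · rw [inv_one, map_one]; rfl
  | mul g1 g2 _ _ ih1 ih2 =>
      constructor
      · rw [rho_mul, ih2.1, ih1.1]
      · rw [mul_inv_rev, rho_mul, ih1.2, ih2.2]
  | inv g _ ih => exact ⟨ih.2, by rw [inv_inv]; exact ih.1⟩

/-- inverse action of the generators -/
lemma rho_inv1 (hρ : IsArtin n ρ) {i : ℕ} (hi : i < n) :
    ρ ((s n i)⁻¹) (X n i) = X n (i+1) := by
  apply (ρ (s n i)).injective
  have h1 : ρ (s n i) (ρ ((s n i)⁻¹) (X n i)) = X n i := by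
    rw [← rho_mul, mul_inv_cancel, map_one]; rfl
  rw [h1, hρ.a2 i hi]

lemma rho_inv2 (hρ : IsArtin n ρ) {i : ℕ} (hi : i < n) :
    ρ ((s n i)⁻¹) (X n (i+1)) = (X n (i+1))⁻¹ * X n i * X n (i+1) := by
  apply (ρ (s n i)).injective
  have h1 : ρ (s n i) (ρ ((s n i)⁻¹) (X n (i+1))) = X n (i+1) := by
    rw [← rho_mul, mul_inv_cancel, map_one]; rfl
  rw [h1, map_mul, map_mul, map_inv, hρ.a1 i hi, hρ.a2 i hi]
  group

lemma rho_inv3 (hρ : IsArtin n ρ) {i k : ℕ} (h1 : k ≠ i) (h2 : k ≠ i + 1) :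
    ρ ((s n i)⁻¹) (X n k) = X n k := by
  apply (ρ (s n i)).injective
  have h3 : ρ (s n i) (ρ ((s n i)⁻¹) (X n k)) = X n k := by
    rw [← rho_mul, mul_inv_cancel, map_one]; rfl
  rw [h3, hρ.a3' i k h1 h2]

end FixTop

/-! ### the inclusion B_m -> B_{m+1} and the restricted representation -/

lemma braid_welldef (m : ℕ) :
    ∀ r ∈ braidRels m, FreeGroup.lift (fun i : Fin m => s (m+1) i.val) r = 1 := by
  intro r hr
  rcases hr with ⟨i, j, hij, rfl⟩ | ⟨i, j, hij, rfl⟩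
  · simp only [map_mul, map_inv, FreeGroup.lift_apply_of]
    have hc := comm_rel (n := m+1) (show (i : ℕ) + 2 ≤ j by omega)
    rw [mul_inv_eq_one, mul_inv_eq_iff_eq_mul]
    exact hc.eq
  · simp only [map_mul, map_inv, FreeGroup.lift_apply_of]
    rw [mul_inv_eq_one]
    exact braid_rel hij (by have := j.isLt; omega)

noncomputable def iota (m : ℕ) : B m →* B (m+1) :=
  PresentedGroup.toGroup (braid_welldef m)

lemma iota_of (m : ℕ) (i : Fin m) : iota m (PresentedGroup.of i) = s (m+1) i.val :=
  PresentedGroup.toGroup.of (braid_welldef m)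

lemma iota_s (m : ℕ) {i : ℕ} (hi : i < m) : iota m (s m i) = s (m+1) i := by
  rw [s_eq_of i hi, iota_of]

lemma range_iota (m : ℕ) : (iota m).range = Hs (m+1) := by
  rw [MonoidHom.range_eq_map, ← PresentedGroup.closure_range_of (braidRels m),
    MonoidHom.map_closure]
  unfold Hs
  congr 1
  ext g
  constructor
  · rintro ⟨x, ⟨i, rfl⟩, rfl⟩
    exact ⟨i.val, by have := i.isLt; omega, iota_of m i⟩
  · rintro ⟨i, hi, rfl⟩
    exact ⟨PresentedGroup.of ⟨i, by omega⟩, ⟨⟨i, by omega⟩, rfl⟩, iota_of m _⟩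

lemma iota_mem_Hs (m : ℕ) (γ : B m) : iota m γ ∈ Hs (m+1) := by
  rw [← range_iota]
  exact ⟨γ, rfl⟩

noncomputable def inc (m : ℕ) : FreeGroup (Fin (m+1)) →* FreeGroup (Fin (m+2)) :=
  FreeGroup.lift (fun k => X (m+1) k.val)

lemma inc_X {m t : ℕ} (ht : t < m + 1) : inc m (X m t) = X (m+1) t := by
  rw [X_eq_of t ht]
  exact FreeGroup.lift_apply_of

lemma X'_eq_X (m t : ℕ) : X' (m+1) t = X m t := rfl

lemma kap_inc (m : ℕ) (w : FreeGroup (Fin (m+1))) : kap (m+1) (inc m w) = w := by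
  have key : (kap (m+1)).comp (inc m) = MonoidHom.id _ := by
    apply FreeGroup.ext_hom
    intro k
    show kap (m+1) (inc m (FreeGroup.of k)) = FreeGroup.of k
    rw [show inc m (FreeGroup.of k) = X (m+1) k.val from FreeGroup.lift_apply_of, kap_X]
    rw [show X' (m+1) k.val = FreeGroup.of ⟨k.val, k.isLt⟩ from dif_pos k.isLt]
  calc kap (m+1) (inc m w) = ((kap (m+1)).comp (inc m)) w := rfl
    _ = w := by rw [key]; rfl

noncomputable def Fr (m : ℕ) : Subgroup (FreeGroup (Fin (m+2))) := (inc m).range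

lemma X_mem_Fr {m t : ℕ} (ht : t < m + 1) : X (m+1) t ∈ Fr m :=
  ⟨X m t, inc_X ht⟩

lemma inc_kap_Fr {m : ℕ} {w : FreeGroup (Fin (m+2))} (hw : w ∈ Fr m) :
    inc m (kap (m+1) w) = w := by
  obtain ⟨u, rfl⟩ := hw
  rw [kap_inc]

lemma Fr_eq_closure (m : ℕ) :
    Fr m = Subgroup.closure {w | ∃ t < m + 1, w = X (m+1) t} := by
  unfold Fr
  rw [MonoidHom.range_eq_map, ← FreeGroup.closure_range_of (α := Fin (m+1)),
    MonoidHom.map_closure]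
  congr 1
  ext g
  constructor
  · rintro ⟨x, ⟨k, rfl⟩, rfl⟩
    exact ⟨k.val, k.isLt, show inc m (FreeGroup.of k) = X (m+1) k.val from FreeGroup.lift_apply_of⟩
  · rintro ⟨t, ht, rfl⟩
    exact ⟨FreeGroup.of ⟨t, ht⟩, ⟨⟨t, ht⟩, rfl⟩, FreeGroup.lift_apply_of⟩

section Restrict

variable {m : ℕ} {ρ : B (m+1) →* MulAut (FreeGroup (Fin (m+2)))}

lemma pres_aux (g : B (m+1)) (hg : ∀ t < m + 1, ρ g (X (m+1) t) ∈ Fr m) :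
    ∀ w ∈ Fr m, ρ g w ∈ Fr m := by
  intro w hw
  rw [Fr_eq_closure] at hw
  induction hw using Subgroup.closure_induction with
  | mem u hu =>
      obtain ⟨t, ht, rfl⟩ := hu
      exact hg t ht
  | one => rw [map_one]; exact one_mem _
  | mul u1 u2 _ _ ih1 ih2 => rw [map_mul]; exact mul_mem ih1 ih2
  | inv u _ ih => rw [map_inv]; exact inv_mem ih

lemma rho_pres_Fr (hρ : IsArtin (m+1) ρ) {c : B (m+1)} (hc : c ∈ Hs (m+1)) :
    ∀ w ∈ Fr m, ρ c w ∈ Fr m ∧ ρ c⁻¹ w ∈ Fr m := by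
  induction hc using Subgroup.closure_induction with
  | mem g hg =>
      obtain ⟨i, hi, rfl⟩ := hg
      intro w hw
      constructor
      · refine pres_aux (s (m+1) i) (fun t ht => ?_) w hw
        by_cases h1 : t = i
        · subst h1
          rw [hρ.a1 t (by omega)]
          exact mul_mem (mul_mem (X_mem_Fr (by omega)) (X_mem_Fr (by omega)))
            (inv_mem (X_mem_Fr (by omega)))
        · by_cases h2 : t = i + 1
          · subst h2
            rw [hρ.a2 i (by omega)]
            exact X_mem_Fr (by omega)
          · rw [hρ.a3' i t h1 h2]
            exact X_mem_Fr ht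
      · refine pres_aux ((s (m+1) i)⁻¹) (fun t ht => ?_) w hw
        by_cases h1 : t = i
        · subst h1
          rw [rho_inv1 hρ (by omega)]
          exact X_mem_Fr (by omega)
        · by_cases h2 : t = i + 1
          · subst h2
            rw [rho_inv2 hρ (by omega)]
            exact mul_mem (mul_mem (inv_mem (X_mem_Fr (by omega)))
              (X_mem_Fr (by omega))) (X_mem_Fr (by omega))
          · rw [rho_inv3 hρ h1 h2]
            exact X_mem_Fr ht
  | one =>
      intro w hw
      rw [inv_one, map_one]
      exact ⟨hw, hw⟩
  | mul g1 g2 _ _ ih1 ih2 =>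
      intro w hw
      constructor
      · rw [rho_mul]
        exact (ih1 _ ((ih2 w hw).1)).1
      · rw [mul_inv_rev, rho_mul]
        exact (ih2 _ ((ih1 w hw).2)).2
  | inv g _ ih =>
      intro w hw
      rw [inv_inv]
      exact ⟨(ih w hw).2, (ih w hw).1⟩

/-- the restricted automorphism of the smaller free group -/
noncomputable def rhoEquiv (hρ : IsArtin (m+1) ρ) (γ : B m) :
    MulAut (FreeGroup (Fin (m+1))) where
  toFun w := kap (m+1) (ρ (iota m γ) (inc m w))
  invFun w := kap (m+1) (ρ ((iota m γ)⁻¹) (inc m w))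
  left_inv w := by
    have hmem : ρ (iota m γ) (inc m w) ∈ Fr m :=
      (rho_pres_Fr hρ (iota_mem_Hs m γ) (inc m w) ⟨w, rfl⟩).1
    show kap (m+1) (ρ ((iota m γ)⁻¹) (inc m (kap (m+1) (ρ (iota m γ) (inc m w))))) = w
    rw [inc_kap_Fr hmem, ← rho_mul, inv_mul_cancel, map_one]
    show kap (m+1) (inc m w) = w
    exact kap_inc m w
  right_inv w := by
    have hmem : ρ ((iota m γ)⁻¹) (inc m w) ∈ Fr m :=
      (rho_pres_Fr hρ (iota_mem_Hs m γ) (inc m w) ⟨w, rfl⟩).2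
    show kap (m+1) (ρ (iota m γ) (inc m (kap (m+1) (ρ ((iota m γ)⁻¹) (inc m w))))) = w
    rw [inc_kap_Fr hmem, ← rho_mul, mul_inv_cancel, map_one]
    show kap (m+1) (inc m w) = w
    exact kap_inc m w
  map_mul' w1 w2 := by
    simp only [map_mul]

lemma rhoEquiv_apply (hρ : IsArtin (m+1) ρ) (γ : B m) (w : FreeGroup (Fin (m+1))) :
    rhoEquiv hρ γ w = kap (m+1) (ρ (iota m γ) (inc m w)) := rfl

noncomputable def rho' (hρ : IsArtin (m+1) ρ) : B m →* MulAut (FreeGroup (Fin (m+1))) :=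
  MonoidHom.mk' (rhoEquiv hρ) (by
    intro γ1 γ2
    apply MulEquiv.ext
    intro w
    show kap (m+1) (ρ (iota m (γ1 * γ2)) (inc m w))
      = rhoEquiv hρ γ1 (rhoEquiv hρ γ2 w)
    rw [rhoEquiv_apply, rhoEquiv_apply]
    have hmem : ρ (iota m γ2) (inc m w) ∈ Fr m :=
      (rho_pres_Fr hρ (iota_mem_Hs m γ2) (inc m w) ⟨w, rfl⟩).1
    rw [inc_kap_Fr hmem, map_mul, rho_mul])

lemma rho'_isArtin (hρ : IsArtin (m+1) ρ) : IsArtin m (rho' hρ) := by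
  have happ : ∀ (i : ℕ) (hi : i < m) (w : FreeGroup (Fin (m+1))),
      rho' hρ (s m i) w = kap (m+1) (ρ (s (m+1) i) (inc m w)) := by
    intro i hi w
    show rhoEquiv hρ (s m i) w = _
    rw [rhoEquiv_apply, iota_s m hi]
  constructor
  · intro i hi
    rw [happ i hi, inc_X (by omega), hρ.a1 i (by omega)]
    simp only [map_mul, map_inv, kap_X, X'_eq_X]
  · intro i hi
    rw [happ i hi, inc_X (by omega), hρ.a2 i (by omega), kap_X, X'_eq_X]
  · intro i hi k h1 h2
    rw [happ i hi]
    by_cases hk : k < m + 1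
    · rw [inc_X hk, hρ.a3' i k h1 h2, kap_X, X'_eq_X]
    · rw [show X m k = 1 from dif_neg hk, map_one, map_one, map_one]

end Restrict

/-! ### the induction -/

lemma B_zero_triv (β : B 0) : β = 1 := by
  induction β using PresentedGroup.induction_on with
  | _ z =>
      have hz : z = 1 := by
        rcases h : z.toWord with _ | ⟨hd, tl⟩
        · exact FreeGroup.toWord_eq_nil_iff.1 h
        · exact hd.1.elim0
      rw [hz, map_one]

theorem aux_faithful (m : ℕ) :
    ∀ ρ : B m →* MulAut (FreeGroup (Fin (m+1))), IsArtin m ρ → Function.Injective ρ := by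
  induction m with
  | zero =>
      intro ρ _ β1 β2 _
      rw [B_zero_triv β1, B_zero_triv β2]
  | succ m ih =>
      intro ρ hρ
      rw [injective_iff_map_eq_one]
      intro β hβ
      obtain ⟨v, c, hc, rfl⟩ := decomp_H (ker_mem_H hρ hβ)
      -- step 1 : v = 1
      have hx : ρ (lam (m+1) v) (X (m+1) (m+1)) = X (m+1) (m+1) := by
        have h0 : ρ (lam (m+1) v * c) (X (m+1) (m+1)) = X (m+1) (m+1) := by
          rw [hβ]; rfl
        rw [rho_mul, (fixtop_Hs hρ hc).1] at h0
        exact h0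
      obtain ⟨W, hW, hk⟩ := lemL hρ v
      rw [hx] at hW
      have hcomm : W * X (m+1) (m+1) = X (m+1) (m+1) * W := by
        conv_rhs => rw [hW]
        group
      have hXof : X (m+1) (m+1) = FreeGroup.of (⟨m+1, by omega⟩ : Fin (m+2)) :=
        X_eq_of _ (by omega)
      obtain ⟨k, hWk⟩ := centralizer_of (x := W) (t := (⟨m+1, by omega⟩ : Fin (m+2)))
        (by rw [← hXof]; exact hcomm)
      have hkap1 : kap (m+1) W = 1 := by
        rw [hWk, map_zpow, ← hXof, kap_X_top, one_zpow]
      rw [hkap1] at hk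
      have hv : v = 1 := by
        have h1 : v⁻¹ = 1 := zeta1_eq_one hk.symm
        rwa [inv_eq_one] at h1
      rw [hv, map_one, one_mul] at hβ ⊢
      -- step 2 : c comes from the smaller braid group
      have hrange : c ∈ (iota m).range := by rw [range_iota]; exact hc
      obtain ⟨γ, rfl⟩ := hrange
      have hγzero : rho' hρ γ = 1 := by
        apply MulEquiv.ext
        intro w
        show kap (m+1) (ρ (iota m γ) (inc m w)) = w
        rw [hβ]
        show kap (m+1) (inc m w) = w
        exact kap_inc m w
      have hγ1 : γ = 1 := by
        apply ih (rho' hρ) (rho'_isArtin hρ)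
        rw [hγzero, map_one]
      rw [hγ1, map_one]

end ArtinAux

/-- **Artin's representation is faithful.** For every `n ≥ 2`, any group homomorphism
`ρ : B_n → Aut(F_n)` sending each braid generator `σ_i` to the automorphism with
`x_i ↦ x_i x_{i+1} x_i⁻¹`, `x_{i+1} ↦ x_i`, fixing all other free generators,
is injective. -/
theorem artin_representation_faithful (n : ℕ) (hn : 2 ≤ n)
    (ρ : PresentedGroup (braidRels (n - 1)) →* MulAut (FreeGroup (Fin n)))
    (hρ : ∀ i : Fin (n - 1),
      (ρ (PresentedGroup.of i)) (FreeGroup.of (xL n i)) =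
          FreeGroup.of (xL n i) * FreeGroup.of (xR n i) * (FreeGroup.of (xL n i))⁻¹ ∧
      (ρ (PresentedGroup.of i)) (FreeGroup.of (xR n i)) = FreeGroup.of (xL n i) ∧
      ∀ j : Fin n, j ≠ xL n i → j ≠ xR n i →
        (ρ (PresentedGroup.of i)) (FreeGroup.of j) = FreeGroup.of j) :
    Function.Injective ρ := by
  obtain ⟨m, rfl⟩ : ∃ m, n = m + 1 := ⟨n - 1, by omega⟩
  apply ArtinAux.aux_faithful m ρ
  constructor
  · intro i hi
    have h := (hρ ⟨i, by omega⟩).1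
    have e0 : ArtinAux.s m i = PresentedGroup.of (⟨i, by omega⟩ : Fin (m+1-1)) :=
      ArtinAux.s_eq_of i hi
    have e1 : FreeGroup.of (xL (m+1) ⟨i, by omega⟩) = ArtinAux.X m i := by
      rw [ArtinAux.X_eq_of i (by omega)]
      rfl
    have e2 : FreeGroup.of (xR (m+1) ⟨i, by omega⟩) = ArtinAux.X m (i+1) := by
      rw [ArtinAux.X_eq_of (i+1) (by omega)]
      rfl
    rw [e0]
    rw [e1, e2] at h
    exact h
  · intro i hi
    have h := (hρ ⟨i, by omega⟩).2.1
    have e0 : ArtinAux.s m i = PresentedGroup.of (⟨i, by omega⟩ : Fin (m+1-1)) :=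
      ArtinAux.s_eq_of i hi
    have e1 : FreeGroup.of (xL (m+1) ⟨i, by omega⟩) = ArtinAux.X m i := by
      rw [ArtinAux.X_eq_of i (by omega)]
      rfl
    have e2 : FreeGroup.of (xR (m+1) ⟨i, by omega⟩) = ArtinAux.X m (i+1) := by
      rw [ArtinAux.X_eq_of (i+1) (by omega)]
      rfl
    rw [e0]
    rw [e1, e2] at h
    exact h
  · intro i hi k h1 h2
    by_cases hk : k < m + 1
    · have h := (hρ ⟨i, by omega⟩).2.2 ⟨k, hk⟩
        (fun hcon => h1 (congrArg Fin.val hcon))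
        (fun hcon => h2 (congrArg Fin.val hcon))
      have e0 : ArtinAux.s m i = PresentedGroup.of (⟨i, by omega⟩ : Fin (m+1-1)) :=
        ArtinAux.s_eq_of i hi
      have e3 : FreeGroup.of (⟨k, hk⟩ : Fin (m+1)) = ArtinAux.X m k := by
        rw [ArtinAux.X_eq_of k hk]
      rw [e0]
      rw [e3] at h
      exact h
    · rw [show ArtinAux.X m k = 1 from dif_neg hk, map_one]
end

section
/- Let k be a nonzero integer and let w be a braid word that begins with σ_1 and contains no occurrence of σ_1^{−1}. Let σ̂ ∈ Aut(F_n) be the image of the braid represented by w under Wada's representation of type (1) with parameter k. Then the reduced word representing σ̂(x_1) in F_n contains at least 2 occurrences of letters x_1^{±1}. -/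
namespace WadaAux

open FreeGroup List

variable {α : Type} [DecidableEq α]

/-- Two letters form a cancelling pair. -/
def Cancels (a b : α × Bool) : Prop := a.1 = b.1 ∧ b.2 = !a.2

instance : DecidablePred (fun p : (α × Bool) × (α × Bool) => Cancels p.1 p.2) := by
  intro p; unfold Cancels; infer_instance

/-- A word is reduced. -/
def IsRed (w : List (α × Bool)) : Prop := List.Chain' (fun a b => ¬ Cancels a b) w

theorem isRed_nil : IsRed ([] : List (α × Bool)) := List.isChain_nil

theorem IsRed.tail {w : List (α × Bool)} {a : α × Bool} (h : IsRed (a :: w)) : IsRed w :=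
  (List.isChain_cons.1 h).2

theorem reduce_eq_self {w : List (α × Bool)} (h : IsRed w) : FreeGroup.reduce w = w := by
  induction w with
  | nil => rfl
  | cons a t ih =>
    have ht : FreeGroup.reduce t = t := ih h.tail
    rw [FreeGroup.reduce.cons, ht]
    cases t with
    | nil => rfl
    | cons b t' =>
      have hc : ¬ Cancels a b := (List.isChain_cons_cons.1 h).1
      simp only [List.casesOn]
      rw [if_neg]
      intro ⟨h1, h2⟩; exact hc ⟨h1, by simp [h2]⟩

theorem isRed_reduce (w : List (α × Bool)) : IsRed (FreeGroup.reduce w) := by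
  induction w with
  | nil => exact isRed_nil
  | cons a t ih =>
    rw [FreeGroup.reduce.cons]
    cases hrt : FreeGroup.reduce t with
    | nil => exact List.isChain_singleton _
    | cons b t' =>
      rw [hrt] at ih
      simp only [List.casesOn]
      by_cases hc : a.1 = b.1 ∧ a.2 = !b.2
      · rw [if_pos hc]; exact ih.tail
      · rw [if_neg hc]
        refine List.isChain_cons_cons.2 ⟨?_, ih⟩
        intro ⟨h1, h2⟩
        exact hc ⟨h1, by cases ha : a.2 <;> cases hb : b.2 <;> simp_all⟩

theorem isRed_toWord (g : FreeGroup α) : IsRed g.toWord := by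
  rw [← FreeGroup.reduce_toWord]; exact isRed_reduce _

theorem toWord_mk_isRed {w : List (α × Bool)} (h : IsRed w) :
    (FreeGroup.mk w).toWord = w := by
  rw [FreeGroup.toWord_mk, reduce_eq_self h]

theorem toWord_mul_red {g h : FreeGroup α} (hr : IsRed (g.toWord ++ h.toWord)) :
    (g * h).toWord = g.toWord ++ h.toWord := by
  conv_lhs => rw [← FreeGroup.mk_toWord (x := g), ← FreeGroup.mk_toWord (x := h)]
  rw [FreeGroup.mul_mk, toWord_mk_isRed hr]

theorem isRed_replicate (m : ℕ) (x : α × Bool) : IsRed (List.replicate m x) := by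
  induction m with
  | zero => exact isRed_nil
  | succ m ih =>
    cases m with
    | zero => exact List.isChain_singleton _
    | succ m' =>
      rw [List.replicate_succ]
      refine List.isChain_cons.2 ⟨?_, ih⟩
      intro y hy ⟨h1, h2⟩
      have : y = x := by
        have : (List.replicate (m'+1) x).head? = _ := List.head?_replicate
        simp only [Nat.succ_ne_zero, if_neg] at this
        rw [this] at hy; simpa using hy.symm
      subst this; simp at h2

theorem toWord_zpow_of (i : α) (c : ℤ) :
    ((FreeGroup.of i) ^ c).toWord = List.replicate c.natAbs (i, decide (0 < c)) := by
  rcases c with m | m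
  · rcases m with _ | m'
    · simp
    · rw [Int.ofNat_eq_natCast, zpow_natCast, FreeGroup.toWord_of_pow]
      congr 1
      simp
  · rw [Int.negSucc_eq, zpow_neg]
    have h1 : (FreeGroup.of i) ^ ((m : ℤ) + 1) = (FreeGroup.of i) ^ ((m + 1 : ℕ) : ℤ) := by
      push_cast; ring_nf
    rw [h1, zpow_natCast, FreeGroup.toWord_inv, FreeGroup.toWord_of_pow]
    have : (0 < Int.negSucc m) = False := by
      simp only [Int.negSucc_eq, eq_iff_iff, iff_false]; omega
    simp [FreeGroup.invRev, Int.negSucc_eq, List.map_replicate, List.reverse_replicate, this]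
    omega

theorem zpow_of_ne_one (i : α) {c : ℤ} (hc : c ≠ 0) : (FreeGroup.of i) ^ c ≠ 1 := by
  intro h
  have := FreeGroup.toWord_eq_nil_iff.2 h
  rw [toWord_zpow_of] at this
  simp at this
  omega

/-- All letters of the reduced word avoid index `i`. -/
def Avoid (i : α) (g : FreeGroup α) : Prop := ∀ l ∈ g.toWord, l.1 ≠ i

theorem avoid_one (i : α) : Avoid i (1 : FreeGroup α) := by
  intro l hl; rw [FreeGroup.toWord_one] at hl; cases hl

theorem Avoid.mul {i : α} {g h : FreeGroup α} (hg : Avoid i g) (hh : Avoid i h) :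
    Avoid i (g * h) := by
  intro l hl
  have := (FreeGroup.toWord_mul_sublist g h).mem hl
  rcases List.mem_append.1 this with h' | h'
  · exact hg l h'
  · exact hh l h'

theorem Avoid.inv {i : α} {g : FreeGroup α} (hg : Avoid i g) : Avoid i g⁻¹ := by
  intro l hl
  rw [FreeGroup.toWord_inv, FreeGroup.invRev] at hl
  rw [List.mem_reverse, List.mem_map] at hl
  obtain ⟨a, ha, rfl⟩ := hl
  exact hg a ha

theorem avoid_of {i j : α} (h : j ≠ i) : Avoid i (FreeGroup.of j) := by
  intro l hl; rw [FreeGroup.toWord_of] at hl; simp at hl; subst hl; exact h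

theorem Avoid.zpow {i : α} {g : FreeGroup α} (hg : Avoid i g) (c : ℤ) : Avoid i (g ^ c) := by
  have hp : ∀ m : ℕ, Avoid i (g ^ m) := by
    intro m
    induction m with
    | zero => simpa using avoid_one i
    | succ m ih => rw [pow_succ]; exact ih.mul hg
  rcases c with m | m
  · simpa using hp m
  · rw [Int.negSucc_eq, zpow_neg]
    exact (by have := hp (m+1); rwa [← zpow_natCast, Nat.cast_succ] at this : Avoid i (g ^ ((m:ℤ)+1))).inv

theorem avoid_zpow_of {i j : α} (h : j ≠ i) (c : ℤ) : Avoid i ((FreeGroup.of j) ^ c) :=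
  (avoid_of h).zpow c


/-! ### Pieces -/

section Pieces

variable (i0 i1 : α)

/-- Evaluation of a piece. -/
def pe : ℤ ⊕ FreeGroup α → FreeGroup α := fun p => p.elim (fun c => FreeGroup.of i0 ^ c) id

/-- The reduced word of a piece. -/
def pw : ℤ ⊕ FreeGroup α → List (α × Bool) :=
  fun p => p.elim (fun c => List.replicate c.natAbs (i0, decide (0 < c))) FreeGroup.toWord

/-- Validity of a piece. -/
def pvalid : ℤ ⊕ FreeGroup α → Prop :=
  fun p => p.elim (fun c => c ≠ 0) (fun h => h ≠ 1 ∧ Avoid i0 h)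

/-- A good list of pieces: valid pieces, alternating between exponent and subgroup type. -/
def GoodL (L : List (ℤ ⊕ FreeGroup α)) : Prop :=
  (∀ p ∈ L, pvalid i0 p) ∧ List.Chain' (fun p q => p.isLeft ≠ q.isLeft) L

/-- Evaluate a list of pieces. -/
def evalL (L : List (ℤ ⊕ FreeGroup α)) : FreeGroup α := (L.map (pe i0)).prod

variable {i0 i1}

theorem GoodL.tail {p : ℤ ⊕ FreeGroup α} {L : List (ℤ ⊕ FreeGroup α)}
    (h : GoodL i0 (p :: L)) : GoodL i0 L :=
  ⟨fun q hq => h.1 q (List.mem_cons_of_mem _ hq), (List.isChain_cons.1 h.2).2⟩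

theorem evalL_nil : evalL i0 ([] : List (ℤ ⊕ FreeGroup α)) = 1 := rfl

theorem evalL_cons (p : ℤ ⊕ FreeGroup α) (L : List (ℤ ⊕ FreeGroup α)) :
    evalL i0 (p :: L) = pe i0 p * evalL i0 L := by
  simp [evalL]

theorem evalL_append (L₁ L₂ : List (ℤ ⊕ FreeGroup α)) :
    evalL i0 (L₁ ++ L₂) = evalL i0 L₁ * evalL i0 L₂ := by
  simp [evalL]

theorem pw_eq_toWord {p : ℤ ⊕ FreeGroup α} : (pe i0 p).toWord = pw i0 p := by
  rcases p with c | h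
  · exact toWord_zpow_of i0 c
  · rfl

theorem pw_ne_nil {p : ℤ ⊕ FreeGroup α} (hp : pvalid i0 p) : pw i0 p ≠ [] := by
  rcases p with c | h
  · simp only [pw, Sum.elim_inl, ne_eq, List.replicate_eq_nil_iff]
    simpa [pvalid] using hp
  · simp only [pw, Sum.elim_inr]
    rw [ne_eq, FreeGroup.toWord_eq_nil_iff]
    exact hp.1

theorem pw_isRed {p : ℤ ⊕ FreeGroup α} : IsRed (pw i0 p) := by
  rcases p with c | h
  · exact isRed_replicate _ _
  · exact isRed_toWord _

theorem pw_idx_left {c : ℤ} {l : α × Bool} (hl : l ∈ pw i0 (Sum.inl c)) : l.1 = i0 := by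
  simp only [pw, Sum.elim_inl] at hl
  rw [List.eq_of_mem_replicate hl]

theorem pw_idx_right {h : FreeGroup α} (hv : pvalid i0 (Sum.inr h))
    {l : α × Bool} (hl : l ∈ pw i0 (Sum.inr h)) : l.1 ≠ i0 :=
  hv.2 l hl

/-- junction compatibility for alternating valid pieces -/
theorem junction_ok {p q : ℤ ⊕ FreeGroup α} (hp : pvalid i0 p) (hq : pvalid i0 q)
    (hpq : p.isLeft ≠ q.isLeft) :
    ∀ a ∈ (pw i0 p).getLast?, ∀ b ∈ (pw i0 q).head?, ¬ Cancels a b := by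
  intro a ha b hb
  have hamem : a ∈ pw i0 p := by
    rcases mem_getLast?_eq_getLast ha with ⟨h', rfl⟩; exact List.getLast_mem h'
  have hbmem : b ∈ pw i0 q := List.mem_of_mem_head? hb
  rintro ⟨hab, -⟩
  rcases p with c | g <;> rcases q with d | g'
  · simp at hpq
  · exact pw_idx_right hq hbmem (hab ▸ pw_idx_left hamem)
  · exact pw_idx_right hp hamem (hab.symm ▸ pw_idx_left hbmem)
  · simp at hpq

theorem wordL {L : List (ℤ ⊕ FreeGroup α)} (hL : GoodL i0 L) :
    IsRed ((L.map (pw i0)).flatten) ∧ (evalL i0 L).toWord = (L.map (pw i0)).flatten := by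
  induction L with
  | nil => exact ⟨isRed_nil, FreeGroup.toWord_one⟩
  | cons p T ih =>
    obtain ⟨ihred, ihword⟩ := ih hL.tail
    have hvp : pvalid i0 p := hL.1 p (List.mem_cons_self)
    have hjunc : ∀ a ∈ (pw i0 p).getLast?, ∀ b ∈ ((T.map (pw i0)).flatten).head?,
        ¬ Cancels a b := by
      intro a ha b hb
      cases T with
      | nil => simp at hb
      | cons q T' =>
        have hvq : pvalid i0 q := hL.1 q (List.mem_cons_of_mem _ (List.mem_cons_self))
        have hq : (pw i0 q) ≠ [] := pw_ne_nil hvq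
        have hb' : b ∈ (pw i0 q).head? := by
          rw [List.map_cons, List.flatten_cons, List.head?_append_of_ne_nil _ hq] at hb
          exact hb
        exact junction_ok hvp hvq ((List.isChain_cons.1 hL.2).1 q rfl) a ha b hb'
    have hred : IsRed ((pw i0 p) ++ (T.map (pw i0)).flatten) :=
      List.isChain_append.2 ⟨pw_isRed, ihred, hjunc⟩
    constructor
    · simpa using hred
    · rw [List.map_cons, List.flatten_cons, evalL_cons]
      rw [toWord_mul_red (by rw [pw_eq_toWord, ihword]; exact hred), pw_eq_toWord, ihword]

theorem evalL_eq_mk {L : List (ℤ ⊕ FreeGroup α)} (hL : GoodL i0 L) :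
    evalL i0 L = FreeGroup.mk ((L.map (pw i0)).flatten) := by
  rw [← (wordL hL).2, FreeGroup.mk_toWord]

end Pieces

/-! ### Splicing lemmas -/

section Splice

variable {i0 i1 : α}

theorem getLast?_cons_ne {β : Type*} (a : β) {l : List β} (h : l ≠ []) :
    (a :: l).getLast? = l.getLast? := by
  cases l with
  | nil => exact absurd rfl h
  | cons b t => exact List.getLast?_cons_cons

theorem mem_flatten_of_inr {C : List (ℤ ⊕ FreeGroup α)} {h : FreeGroup α}
    (hmem : Sum.inr h ∈ C) {l : α × Bool} (hl : l ∈ FreeGroup.toWord h) :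
    l ∈ (C.map (pw i0)).flatten := by
  rw [List.mem_flatten]
  exact ⟨pw i0 (Sum.inr h), List.mem_map_of_mem hmem, hl⟩

theorem GoodL.chain {L : List (ℤ ⊕ FreeGroup α)} (h : GoodL i0 L) :
    List.Chain' (fun p q : ℤ ⊕ FreeGroup α => p.isLeft ≠ q.isLeft) L := h.2

/-- Prepend `x1^e` to a good list, merging with a leading exponent piece. -/
theorem lcons (e : ℤ) {C : List (ℤ ⊕ FreeGroup α)} (hC : GoodL i0 C) :
    ∃ D, GoodL i0 D ∧ evalL i0 D = FreeGroup.of i0 ^ e * evalL i0 C ∧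
      (∀ h, Sum.inr h ∈ D → Sum.inr h ∈ C) := by
  cases C with
  | nil =>
    by_cases he : e = 0
    · exact ⟨[], ⟨by simp, List.isChain_nil⟩, by simp [he, evalL_nil], by simp⟩
    · refine ⟨[Sum.inl e], ⟨by simpa [pvalid] using he, List.isChain_singleton _⟩, ?_, by simp⟩
      simp [evalL, pe]
  | cons p t =>
    rcases p with c | h
    · by_cases hec : e + c = 0
      · refine ⟨t, hC.tail, ?_, fun h hm => List.mem_cons_of_mem _ hm⟩
        rw [evalL_cons, ← mul_assoc]
        simp only [pe, Sum.elim_inl]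
        rw [← zpow_add, hec, zpow_zero, one_mul]
      · refine ⟨Sum.inl (e + c) :: t, ⟨?_, ?_⟩, ?_, ?_⟩
        · intro q hq
          rcases List.mem_cons.1 hq with rfl | hq'
          · simpa [pvalid] using hec
          · exact hC.1 q (List.mem_cons_of_mem _ hq')
        · refine List.isChain_cons.2 ⟨?_, (List.isChain_cons.1 hC.2).2⟩
          intro y hy
          exact (List.isChain_cons.1 hC.2).1 y hy
        · rw [evalL_cons, evalL_cons, ← mul_assoc]
          simp only [pe, Sum.elim_inl]
          rw [← zpow_add]
        · intro h hm
          rcases List.mem_cons.1 hm with h' | hm'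
          · exact absurd h' (by simp)
          · exact List.mem_cons_of_mem _ hm'
    · by_cases he : e = 0
      · exact ⟨Sum.inr h :: t, hC, by simp [he], fun _ hm => hm⟩
      · refine ⟨Sum.inl e :: Sum.inr h :: t, ⟨?_, ?_⟩, ?_, ?_⟩
        · intro q hq
          rcases List.mem_cons.1 hq with rfl | hq'
          · simpa [pvalid] using he
          · exact hC.1 q hq'
        · exact List.isChain_cons.2 ⟨by simp, hC.2⟩
        · rw [evalL_cons]; rfl
        · intro h' hm
          rcases List.mem_cons.1 hm with h' | hm'
          · exact absurd h' (by simp)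
          · exact hm'

/-- Append `x1^e` to a good list, merging with a trailing exponent piece. -/
theorem rcons (e : ℤ) {C : List (ℤ ⊕ FreeGroup α)} (hC : GoodL i0 C) :
    ∃ D, GoodL i0 D ∧ evalL i0 D = evalL i0 C * FreeGroup.of i0 ^ e ∧
      (∀ h, Sum.inr h ∈ D → Sum.inr h ∈ C) := by
  rcases List.eq_nil_or_concat C with rfl | ⟨C₀, p, rfl⟩
  · by_cases he : e = 0
    · exact ⟨[], ⟨by simp, List.isChain_nil⟩, by simp [he, evalL_nil], by simp⟩
    · refine ⟨[Sum.inl e], ⟨by simpa [pvalid] using he, List.isChain_singleton _⟩, ?_, by simp⟩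
      simp [evalL, pe]
  · rw [List.concat_eq_append] at *
    have hchain := List.isChain_append.1 hC.2
    rcases p with c | h
    · by_cases hec : c + e = 0
      · refine ⟨C₀, ⟨fun q hq => hC.1 q (by simp [hq]), hchain.1⟩, ?_, fun h hm => by simp [hm]⟩
        rw [evalL_append, mul_assoc]
        simp only [evalL_cons, evalL_nil, pe, Sum.elim_inl, mul_one]
        rw [← zpow_add, hec, zpow_zero, mul_one]
      · refine ⟨C₀ ++ [Sum.inl (c + e)], ⟨?_, ?_⟩, ?_, ?_⟩
        · intro q hq
          rcases List.mem_append.1 hq with hq' | hq'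
          · exact hC.1 q (by simp [hq'])
          · simp only [List.mem_singleton] at hq'
            subst hq'; simpa [pvalid] using hec
        · refine List.isChain_append.2 ⟨hchain.1, List.isChain_singleton _, ?_⟩
          intro x hx y hy
          simp only [List.head?_cons, Option.mem_def, Option.some.injEq] at hy
          subst hy
          exact hchain.2.2 x hx (Sum.inl c) rfl
        · rw [evalL_append, evalL_append, mul_assoc]
          simp only [evalL_cons, evalL_nil, pe, Sum.elim_inl, mul_one]
          rw [← zpow_add]
        · intro h hm
          rcases List.mem_append.1 hm with hq' | hq'
          · simp [hq']
          · simp at hq'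
    · by_cases he : e = 0
      · exact ⟨C₀ ++ [Sum.inr h], hC, by simp [he], fun _ hm => hm⟩
      · refine ⟨(C₀ ++ [Sum.inr h]) ++ [Sum.inl e], ⟨?_, ?_⟩, ?_, ?_⟩
        · intro q hq
          rcases List.mem_append.1 hq with hq' | hq'
          · exact hC.1 q hq'
          · simp only [List.mem_singleton] at hq'
            subst hq'; simpa [pvalid] using he
        · refine List.isChain_append.2 ⟨hC.2, List.isChain_singleton _, ?_⟩
          intro x hx y hy
          simp only [List.head?_cons, Option.mem_def, Option.some.injEq] at hy
          subst hy
          rw [List.getLast?_append, List.getLast?_cons, List.getLast?_nil] at hx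
          simp only [Option.or, Option.mem_def, Option.some.injEq] at hx
          subst hx
          simp
        · rw [evalL_append, evalL_append]
          simp [evalL, pe, mul_assoc]
        · intro h' hm
          rcases List.mem_append.1 hm with hq' | hq'
          · exact hq'
          · simp at hq'

end Splice


/-! ### glue and gapp -/

section Glue

variable {i0 i1 : α}

theorem toWord_ne_nil {h : FreeGroup α} (hh : h ≠ 1) : FreeGroup.toWord h ≠ [] :=
  fun hc => hh (FreeGroup.toWord_eq_nil_iff.1 hc)

/-- Prepend `x2^c` to a good list whose possible leading subgroup piece starts with a
letter of index outside `{i0, i1}`. -/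
theorem glue (h01 : i0 ≠ i1) {c z : ℤ} (hc : c ≠ 0) {D : List (ℤ ⊕ FreeGroup α)}
    (hD : GoodL i0 D) (hlast : D.getLast? = some (Sum.inl z))
    (hhead : ∀ h l, D.head? = some (Sum.inr h) → (FreeGroup.toWord h).head? = some l →
      l.1 ≠ i0 ∧ l.1 ≠ i1) :
    ∃ E h₁, GoodL i0 E ∧ evalL i0 E = FreeGroup.of i1 ^ c * evalL i0 D ∧
      E.getLast? = some (Sum.inl z) ∧ E.head? = some (Sum.inr h₁) ∧
      (∀ l, (FreeGroup.toWord h₁).head? = some l → l.1 = i1) := by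
  have hword : (FreeGroup.of i1 ^ c).toWord = List.replicate c.natAbs (i1, decide (0 < c)) :=
    toWord_zpow_of i1 c
  have hnatAbs : c.natAbs ≠ 0 := fun hc' => hc (Int.natAbs_eq_zero.1 hc')
  cases D with
  | nil => simp at hlast
  | cons p t =>
    rcases p with d | h₀
    · -- leading exponent piece : just cons
      refine ⟨Sum.inr (FreeGroup.of i1 ^ c) :: Sum.inl d :: t, FreeGroup.of i1 ^ c, ⟨?_, ?_⟩,
        ?_, ?_, rfl, ?_⟩
      · intro q hq
        rcases List.mem_cons.1 hq with rfl | hq'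
        · exact ⟨zpow_of_ne_one i1 hc, avoid_zpow_of (Ne.symm h01) c⟩
        · exact hD.1 q hq'
      · exact List.isChain_cons.2 ⟨by simp, hD.2⟩
      · rw [evalL_cons]; rfl
      · rw [getLast?_cons_ne _ (by simp)]; exact hlast
      · intro l hl
        rw [hword, List.head?_replicate, if_neg hnatAbs] at hl
        cases hl; rfl
    · -- leading subgroup piece : merge
      have hval₀ : pvalid i0 (Sum.inr h₀) := hD.1 _ (List.mem_cons_self)
      obtain ⟨l₀, hl₀⟩ : ∃ l₀, (FreeGroup.toWord h₀).head? = some l₀ := by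
        cases hw : FreeGroup.toWord h₀ with
        | nil => exact absurd hw (toWord_ne_nil hval₀.1)
        | cons a u => exact ⟨a, rfl⟩
      have hl₀' := hhead h₀ l₀ rfl hl₀
      have hmulred : IsRed ((FreeGroup.of i1 ^ c).toWord ++ (FreeGroup.toWord h₀)) := by
        refine List.isChain_append.2 ⟨hword ▸ isRed_replicate _ _, isRed_toWord _, ?_⟩
        intro x hx y hy
        have hxx : x = (i1, decide (0 < c)) := by
          have : x ∈ (FreeGroup.of i1 ^ c).toWord := by
            rcases mem_getLast?_eq_getLast hx with ⟨h', rfl⟩; exact List.getLast_mem h'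
          rw [hword] at this; exact List.eq_of_mem_replicate this
        rw [hl₀] at hy
        cases hy
        rintro ⟨hab, -⟩
        rw [hxx] at hab
        exact hl₀'.2 hab.symm
      have htw : (FreeGroup.of i1 ^ c * h₀).toWord =
          (FreeGroup.of i1 ^ c).toWord ++ FreeGroup.toWord h₀ := toWord_mul_red hmulred
      have hne1 : FreeGroup.of i1 ^ c * h₀ ≠ 1 := by
        intro hcon
        have := FreeGroup.toWord_eq_nil_iff.2 hcon
        rw [htw, List.append_eq_nil_iff] at this
        exact toWord_ne_nil hval₀.1 this.2
      have htne : t ≠ [] := by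
        rintro rfl
        rw [List.getLast?_singleton] at hlast
        cases hlast
      refine ⟨Sum.inr (FreeGroup.of i1 ^ c * h₀) :: t, FreeGroup.of i1 ^ c * h₀, ⟨?_, ?_⟩,
        ?_, ?_, rfl, ?_⟩
      · intro q hq
        rcases List.mem_cons.1 hq with rfl | hq'
        · exact ⟨hne1, (avoid_zpow_of (Ne.symm h01) c).mul hval₀.2⟩
        · exact hD.1 q (List.mem_cons_of_mem _ hq')
      · refine List.isChain_cons.2 ⟨?_, (List.isChain_cons.1 hD.2).2⟩
        intro y hy
        exact (List.isChain_cons.1 hD.2).1 y hy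
      · rw [evalL_cons, evalL_cons, ← mul_assoc]; rfl
      · rw [getLast?_cons_ne _ htne, ← getLast?_cons_ne (Sum.inr h₀) htne]; exact hlast
      · intro l hl
        rw [htw, List.head?_append_of_ne_nil _ (by rw [hword]; simpa using hnatAbs), hword,
          List.head?_replicate, if_neg hnatAbs] at hl
        cases hl; rfl

/-- Concatenate a good list (whose subgroup pieces avoid `i0`, `i1`) with a good list
starting with a subgroup piece whose word starts with an `i1`-letter. -/
theorem gapp (h01 : i0 ≠ i1) {z : ℤ} {C D : List (ℤ ⊕ FreeGroup α)} {h₀ : FreeGroup α}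
    (hC : GoodL i0 C) (hCne : C ≠ [])
    (hCPH : ∀ h l, Sum.inr h ∈ C → l ∈ FreeGroup.toWord h → l.1 ≠ i0 ∧ l.1 ≠ i1)
    (hD : GoodL i0 D) (hDhead : D.head? = some (Sum.inr h₀))
    (hh₀ : ∀ l, (FreeGroup.toWord h₀).head? = some l → l.1 = i1)
    (hDlast : D.getLast? = some (Sum.inl z)) :
    ∃ E, GoodL i0 E ∧ evalL i0 E = evalL i0 C * evalL i0 D ∧
      E.getLast? = some (Sum.inl z) ∧
      (∀ h l, E.head? = some (Sum.inr h) → (FreeGroup.toWord h).head? = some l →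
        l.1 ≠ i0 ∧ l.1 ≠ i1) := by
  obtain ⟨t, rfl⟩ : ∃ t, D = Sum.inr h₀ :: t := by
    cases D with
    | nil => cases hDhead
    | cons p t => cases hDhead; exact ⟨t, rfl⟩
  have htne : t ≠ [] := by
    rintro rfl
    rw [List.getLast?_singleton] at hDlast
    cases hDlast
  have hDlast' : t.getLast? = some (Sum.inl z) := by
    rw [getLast?_cons_ne _ htne] at hDlast; exact hDlast
  rcases List.eq_nil_or_concat C with rfl | ⟨C₀, p, rfl⟩
  · exact absurd rfl hCne
  rw [List.concat_eq_append] at *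
  rcases p with d | κ
  · -- last piece of C is an exponent : plain append
    refine ⟨(C₀ ++ [Sum.inl d]) ++ (Sum.inr h₀ :: t), ⟨?_, ?_⟩, ?_, ?_, ?_⟩
    · intro q hq
      rcases List.mem_append.1 hq with hq' | hq'
      · exact hC.1 q hq'
      · exact hD.1 q hq'
    · refine List.isChain_append.2 ⟨hC.2, hD.2, ?_⟩
      intro x hx y hy
      rw [List.getLast?_concat] at hx
      cases hx
      simp only [List.head?_cons, Option.mem_def, Option.some.injEq] at hy
      subst hy
      simp
    · rw [evalL_append]
    · rw [List.getLast?_append, getLast?_cons_ne _ htne, hDlast']; rfl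
    · intro h l hh hl
      rw [List.head?_append_of_ne_nil _ (by simp)] at hh
      have : Sum.inr h ∈ C₀ ++ [Sum.inl d] := List.mem_of_mem_head? hh
      exact hCPH h l this (List.mem_of_mem_head? (by rw [hl]; simp))
  · -- last piece of C is a subgroup piece : merge with h₀
    have hκmem : Sum.inr κ ∈ C₀ ++ [Sum.inr κ] := by simp
    have hκval : pvalid i0 (Sum.inr κ) := hC.1 _ hκmem
    have hh₀val : pvalid i0 (Sum.inr h₀) := hD.1 _ (List.mem_cons_self)
    obtain ⟨l₀, hl₀⟩ : ∃ l₀, (FreeGroup.toWord h₀).head? = some l₀ := by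
      cases hw : FreeGroup.toWord h₀ with
      | nil => exact absurd hw (toWord_ne_nil hh₀val.1)
      | cons a u => exact ⟨a, rfl⟩
    have hmulred : IsRed (FreeGroup.toWord κ ++ FreeGroup.toWord h₀) := by
      refine List.isChain_append.2 ⟨isRed_toWord _, isRed_toWord _, ?_⟩
      intro x hx y hy
      have hxmem : x ∈ FreeGroup.toWord κ := by
        rcases mem_getLast?_eq_getLast hx with ⟨h', rfl⟩; exact List.getLast_mem h'
      rw [hl₀] at hy
      cases hy
      rintro ⟨hab, -⟩
      exact (hCPH κ x hκmem hxmem).2 (hab.trans (hh₀ l₀ hl₀))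
    have htw : (κ * h₀).toWord = FreeGroup.toWord κ ++ FreeGroup.toWord h₀ :=
      toWord_mul_red hmulred
    have hne1 : κ * h₀ ≠ 1 := by
      intro hcon
      have := FreeGroup.toWord_eq_nil_iff.2 hcon
      rw [htw, List.append_eq_nil_iff] at this
      exact toWord_ne_nil hκval.1 this.1
    have hCchain := List.isChain_append.1 hC.2
    refine ⟨C₀ ++ (Sum.inr (κ * h₀) :: t), ⟨?_, ?_⟩, ?_, ?_, ?_⟩
    · intro q hq
      rcases List.mem_append.1 hq with hq' | hq'
      · exact hC.1 q (by simp [hq'])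
      · rcases List.mem_cons.1 hq' with rfl | hq''
        · exact ⟨hne1, hκval.2.mul hh₀val.2⟩
        · exact hD.1 q (List.mem_cons_of_mem _ hq'')
    · refine List.isChain_append.2 ⟨hCchain.1, ?_, ?_⟩
      · refine List.isChain_cons.2 ⟨?_, (List.isChain_cons.1 hD.2).2⟩
        intro y hy
        exact (List.isChain_cons.1 hD.2).1 y hy
      · intro x hx y hy
        simp only [List.head?_cons, Option.mem_def, Option.some.injEq] at hy
        subst hy
        exact hCchain.2.2 x hx (Sum.inr κ) rfl
    · rw [evalL_append, evalL_append, evalL_cons, evalL_cons, evalL_cons]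
      simp only [pe, Sum.elim_inr, evalL_nil, mul_one, id_eq]
      group
    · rw [List.getLast?_append, getLast?_cons_ne _ htne, hDlast']; rfl
    · intro h l hh hl
      cases C₀ with
      | nil =>
        simp only [List.nil_append, List.head?_cons, Option.some.injEq] at hh
        cases hh
        rw [htw, List.head?_append_of_ne_nil _ (toWord_ne_nil hκval.1)] at hl
        exact hCPH κ l hκmem (List.mem_of_mem_head? hl)
      | cons q C₀' =>
        simp only [List.cons_append, List.head?_cons, Option.some.injEq] at hh
        subst hh
        exact hCPH h l (by simp) (List.mem_of_mem_head? (by rw [hl]; simp))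

end Glue


/-! ### Chunking a reduced word into pieces -/

section Chunk

variable {i0 i1 : α}

theorem toWord_mk_singleton (l : α × Bool) : (FreeGroup.mk [l]).toWord = [l] := by
  rw [FreeGroup.toWord_mk, FreeGroup.reduce_singleton]

theorem mk_singleton_ne_one (l : α × Bool) : FreeGroup.mk [l] ≠ 1 := by
  intro h
  have := FreeGroup.toWord_eq_nil_iff.2 h
  rw [toWord_mk_singleton] at this
  cases this

theorem chunk : ∀ w : List (α × Bool), IsRed w → (∀ l ∈ w, l.1 ≠ i1) →
    ∃ C : List (ℤ ⊕ FreeGroup α), GoodL i0 C ∧ (C.map (pw i0)).flatten = w := by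
  intro w
  induction w with
  | nil => exact fun _ _ => ⟨[], ⟨by simp, List.isChain_nil⟩, rfl⟩
  | cons l w' ih =>
    intro hred hav
    obtain ⟨C', hC', hflat⟩ := ih hred.tail (fun x hx => hav x (List.mem_cons_of_mem _ hx))
    have hnocancel : ∀ b, w'.head? = some b → ¬ Cancels l b := by
      intro b hb
      exact (List.isChain_cons.1 hred).1 b hb
    by_cases hli : l.1 = i0
    · -- i0 letter
      cases C' with
      | cons p t =>
        rcases p with c | h
        · -- merge into exponent piece
          have hcval : pvalid i0 (Sum.inl c : ℤ ⊕ FreeGroup α) :=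
            hC'.1 _ (List.mem_cons_self)
          have hcne : c ≠ 0 := by simpa [pvalid] using hcval
          have hw'head : w'.head? = some (i0, decide (0 < c)) := by
            rw [← hflat, List.map_cons, List.flatten_cons,
              List.head?_append_of_ne_nil _ (pw_ne_nil hcval)]
            simp only [pw, Sum.elim_inl, List.head?_replicate,
              if_neg (fun h => hcne (Int.natAbs_eq_zero.1 h))]
          have hsign : l.2 = decide (0 < c) := by
            have := hnocancel _ hw'head
            simp only [Cancels, not_and] at this
            have h2 := this hli
            cases hb : l.2 <;> cases hc0 : decide (0 < c) <;> simp_all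
          set ε : ℤ := if l.2 then 1 else -1 with hε
          have hsignc : (0 < c ∧ ε = 1) ∨ (c < 0 ∧ ε = -1) := by
            rcases lt_trichotomy 0 c with h | h | h
            · left
              refine ⟨h, ?_⟩
              rw [hε, if_pos]
              rw [hsign]; simpa using h
            · exact absurd h.symm hcne
            · right
              refine ⟨h, ?_⟩
              rw [hε, if_neg]
              rw [hsign]; simp; omega
          have hcε : c + ε ≠ 0 := by rcases hsignc with ⟨h1, h2⟩ | ⟨h1, h2⟩ <;> omega
          refine ⟨Sum.inl (c + ε) :: t, ⟨?_, ?_⟩, ?_⟩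
          · intro q hq
            rcases List.mem_cons.1 hq with rfl | hq'
            · simpa [pvalid] using hcε
            · exact hC'.1 q (List.mem_cons_of_mem _ hq')
          · refine List.isChain_cons.2 ⟨?_, (List.isChain_cons.1 hC'.2).2⟩
            intro y hy
            exact (List.isChain_cons.1 hC'.2).1 y hy
          · rw [List.map_cons, List.flatten_cons]
            rw [List.map_cons, List.flatten_cons] at hflat
            have hrep : pw i0 (Sum.inl (c + ε) : ℤ ⊕ FreeGroup α) =
                l :: pw i0 (Sum.inl c : ℤ ⊕ FreeGroup α) := by
              simp only [pw, Sum.elim_inl]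
              have hl2 : l = (i0, decide (0 < c + ε)) := by
                have : decide (0 < c + ε) = l.2 := by
                  rcases hsignc with ⟨h1, h2⟩ | ⟨h1, h2⟩
                  · rw [hsign]; simp; omega
                  · rw [hsign]; simp; omega
                rw [this, ← hli]
              have hna : (c + ε).natAbs = c.natAbs + 1 := by
                rcases hsignc with ⟨h1, h2⟩ | ⟨h1, h2⟩ <;> omega
              have hbb : decide (0 < c + ε) = decide (0 < c) := by
                rcases hsignc with ⟨h1, h2⟩ | ⟨h1, h2⟩ <;> simp <;> omega
              rw [hbb] at hl2
              rw [hna, List.replicate_succ, hbb, ← hl2]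
            rw [hrep, List.cons_append, hflat]
        · -- cons a fresh exponent piece ±1
          have hε1 : (if l.2 then (1:ℤ) else -1) ≠ 0 := by split <;> simp
          refine ⟨Sum.inl (if l.2 then (1:ℤ) else -1) :: Sum.inr h :: t, ⟨?_, ?_⟩, ?_⟩
          · intro q hq
            rcases List.mem_cons.1 hq with rfl | hq'
            · simpa [pvalid] using hε1
            · exact hC'.1 q hq'
          · exact List.isChain_cons.2 ⟨by simp, hC'.2⟩
          · rw [List.map_cons, List.flatten_cons, hflat]
            have : pw i0 (Sum.inl (if l.2 then (1:ℤ) else -1) : ℤ ⊕ FreeGroup α) = [l] := by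
              obtain ⟨a, b⟩ := l
              simp only at hli
              subst hli
              cases b <;> norm_num [pw]
            rw [this]; rfl
      | nil =>
        have hε1 : (if l.2 then (1:ℤ) else -1) ≠ 0 := by split <;> simp
        refine ⟨[Sum.inl (if l.2 then (1:ℤ) else -1)], ⟨?_, List.isChain_singleton _⟩, ?_⟩
        · intro q hq
          rcases List.mem_singleton.1 hq with rfl
          simpa [pvalid] using hε1
        · have hw' : w' = [] := by
            rw [← hflat]; rfl
          have : pw i0 (Sum.inl (if l.2 then (1:ℤ) else -1) : ℤ ⊕ FreeGroup α) = [l] := by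
            obtain ⟨a, b⟩ := l
            simp only at hli
            subst hli
            cases b <;> norm_num [pw]
          simp [this, hw']
    · -- letter avoiding i0 (and i1)
      cases C' with
      | cons p t =>
        rcases p with c | h
        · -- cons a fresh subgroup piece
          refine ⟨Sum.inr (FreeGroup.mk [l]) :: Sum.inl c :: t, ⟨?_, ?_⟩, ?_⟩
          · intro q hq
            rcases List.mem_cons.1 hq with rfl | hq'
            · refine ⟨mk_singleton_ne_one l, ?_⟩
              intro x hx
              rw [toWord_mk_singleton] at hx
              rcases List.mem_singleton.1 hx with rfl
              exact hli
            · exact hC'.1 q hq'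
          · exact List.isChain_cons.2 ⟨by simp, hC'.2⟩
          · rw [List.map_cons, List.flatten_cons, hflat]
            have : pw i0 (Sum.inr (FreeGroup.mk [l]) : ℤ ⊕ FreeGroup α) = [l] := by
              simp only [pw, Sum.elim_inr]
              exact toWord_mk_singleton l
            rw [this]; rfl
        · -- merge into subgroup piece
          have hval : pvalid i0 (Sum.inr h : ℤ ⊕ FreeGroup α) :=
            hC'.1 _ (List.mem_cons_self)
          obtain ⟨b₀, hb₀⟩ : ∃ b₀, (FreeGroup.toWord h).head? = some b₀ := by
            cases hw : FreeGroup.toWord h with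
            | nil => exact absurd hw (toWord_ne_nil hval.1)
            | cons a u => exact ⟨a, rfl⟩
          have hw'head : w'.head? = some b₀ := by
            rw [← hflat, List.map_cons, List.flatten_cons,
              List.head?_append_of_ne_nil _ (pw_ne_nil hval)]
            exact hb₀
          have hnc := hnocancel _ hw'head
          have hmulred : IsRed ([l] ++ FreeGroup.toWord h) := by
            refine List.isChain_append.2 ⟨List.isChain_singleton _, isRed_toWord _, ?_⟩
            intro x hx y hy
            simp only [List.getLast?_singleton, Option.mem_def, Option.some.injEq] at hx
            subst hx
            rw [hb₀] at hy
            cases hy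
            exact hnc
          have htw : (FreeGroup.mk [l] * h).toWord = l :: FreeGroup.toWord h := by
            have := toWord_mul_red (g := FreeGroup.mk [l]) (h := h)
              (by rw [toWord_mk_singleton]; exact hmulred)
            rw [toWord_mk_singleton] at this
            exact this
          have hne1 : FreeGroup.mk [l] * h ≠ 1 := by
            intro hcon
            have := FreeGroup.toWord_eq_nil_iff.2 hcon
            rw [htw] at this
            cases this
          refine ⟨Sum.inr (FreeGroup.mk [l] * h) :: t, ⟨?_, ?_⟩, ?_⟩
          · intro q hq
            rcases List.mem_cons.1 hq with rfl | hq'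
            · refine ⟨hne1, ?_⟩
              intro x hx
              rw [htw] at hx
              rcases List.mem_cons.1 hx with rfl | hx'
              · exact hli
              · exact hval.2 x hx'
            · exact hC'.1 q (List.mem_cons_of_mem _ hq')
          · refine List.isChain_cons.2 ⟨?_, (List.isChain_cons.1 hC'.2).2⟩
            intro y hy
            exact (List.isChain_cons.1 hC'.2).1 y hy
          · rw [List.map_cons, List.flatten_cons]
            rw [List.map_cons, List.flatten_cons] at hflat
            simp only [pw, Sum.elim_inr] at hflat ⊢
            rw [htw, List.cons_append, hflat]
      | nil =>
        refine ⟨[Sum.inr (FreeGroup.mk [l])], ⟨?_, List.isChain_singleton _⟩, ?_⟩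
        · intro q hq
          rcases List.mem_singleton.1 hq with rfl
          refine ⟨mk_singleton_ne_one l, ?_⟩
          intro x hx
          rw [toWord_mk_singleton] at hx
          rcases List.mem_singleton.1 hx with rfl
          exact hli
        · have hw' : w' = [] := by rw [← hflat]; rfl
          simp [pw, toWord_mk_singleton, hw']

end Chunk


/-! ### The action of the Wada generator -/

section AAction

variable {i0 i1 : α}

/-- The index relabeling induced by `A` on words avoiding `i0`. -/
def rho (i0 i1 : α) : α → α := fun j => if j = i1 then i0 else j

theorem rho_inj (h01 : i0 ≠ i1) {a b : α} (ha : a ≠ i0) (hb : b ≠ i0)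
    (h : rho i0 i1 a = rho i0 i1 b) : a = b := by
  unfold rho at h
  by_cases ha1 : a = i1 <;> by_cases hb1 : b = i1 <;> simp [ha1, hb1] at h ⊢ <;> tauto

theorem rho_ne_i1 (h01 : i0 ≠ i1) (j : α) : rho i0 i1 j ≠ i1 := by
  unfold rho
  split
  · exact h01
  · assumption

theorem mk_singleton_false (j : α) :
    FreeGroup.mk [(j, false)] = (FreeGroup.of j)⁻¹ := by
  show FreeGroup.mk [(j, false)] = (FreeGroup.mk [(j, true)])⁻¹
  rw [FreeGroup.inv_mk]
  rfl

theorem mk_cons (l : α × Bool) (w : List (α × Bool)) :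
    FreeGroup.mk (l :: w) = FreeGroup.mk [l] * FreeGroup.mk w := by
  rw [FreeGroup.mul_mk]
  rfl

variable (A : MulAut (FreeGroup α))

theorem A_of (h01 : i0 ≠ i1)
    (hA1 : A (FreeGroup.of i1) = FreeGroup.of i0)
    (hA2 : ∀ j, j ≠ i0 → j ≠ i1 → A (FreeGroup.of j) = FreeGroup.of j)
    {j : α} (hj : j ≠ i0) : A (FreeGroup.of j) = FreeGroup.of (rho i0 i1 j) := by
  by_cases hj1 : j = i1
  · subst hj1; rw [hA1]; unfold rho; simp
  · rw [hA2 j hj hj1]; unfold rho; simp [hj1]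

theorem A_mk (h01 : i0 ≠ i1)
    (hA1 : A (FreeGroup.of i1) = FreeGroup.of i0)
    (hA2 : ∀ j, j ≠ i0 → j ≠ i1 → A (FreeGroup.of j) = FreeGroup.of j) :
    ∀ w : List (α × Bool), (∀ l ∈ w, l.1 ≠ i0) →
    A (FreeGroup.mk w) = FreeGroup.mk (w.map (fun l => (rho i0 i1 l.1, l.2))) := by
  intro w
  induction w with
  | nil =>
    intro _
    rw [show FreeGroup.mk ([] : List (α × Bool)) = 1 from FreeGroup.one_eq_mk.symm]
    simp
    exact FreeGroup.one_eq_mk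
  | cons l t ih =>
    intro hw
    rw [mk_cons, _root_.map_mul A, ih (fun x hx => hw x (List.mem_cons_of_mem _ hx)),
      List.map_cons, mk_cons (((rho i0 i1 l.1), l.2))]
    congr 1
    obtain ⟨j, b⟩ := l
    have hj : j ≠ i0 := hw (j, b) (List.mem_cons_self)
    cases b with
    | false =>
      show A (FreeGroup.mk [(j, false)]) = FreeGroup.mk [(rho i0 i1 j, false)]
      rw [mk_singleton_false, mk_singleton_false,
        _root_.map_inv A (FreeGroup.of j), A_of A h01 hA1 hA2 hj]
    | true =>
      show A (FreeGroup.mk [(j, true)]) = FreeGroup.mk [(rho i0 i1 j, true)]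
      exact A_of A h01 hA1 hA2 hj

theorem mapped_isRed (h01 : i0 ≠ i1) :
    ∀ w : List (α × Bool), IsRed w → (∀ l ∈ w, l.1 ≠ i0) →
      IsRed (w.map (fun l => (rho i0 i1 l.1, l.2)))
  | [] => fun _ _ => isRed_nil
  | [a] => fun _ _ => List.isChain_singleton _
  | a :: b :: t => by
    intro hred hw
    refine List.isChain_cons_cons.2 ⟨?_, mapped_isRed h01 (b :: t) (List.isChain_cons_cons.1 hred).2
      (fun x hx => hw x (List.mem_cons_of_mem _ hx))⟩
    rintro ⟨h1, h2⟩
    refine (List.isChain_cons_cons.1 hred).1 ⟨?_, h2⟩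
    exact rho_inj h01 (hw a (List.mem_cons_self))
      (hw b (List.mem_cons_of_mem _ (List.mem_cons_self))) h1

end AAction

section Main

variable {i0 i1 : α} {k : ℤ}

theorem A_zpow_i0 {A : MulAut (FreeGroup α)}
    (hA0 : A (FreeGroup.of i0) =
      FreeGroup.of i0 ^ k * FreeGroup.of i1 * FreeGroup.of i0 ^ (-k)) (c : ℤ) :
    A (FreeGroup.of i0 ^ c) =
      FreeGroup.of i0 ^ k * FreeGroup.of i1 ^ c * FreeGroup.of i0 ^ (-k) := by
  rw [map_zpow, hA0, zpow_neg, conj_zpow]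

/-- Decomposition of `x1^{-k} * A h * x1^k` for `h` avoiding `i0`. -/
theorem flank_chunk (h01 : i0 ≠ i1) (hk : k ≠ 0) {A : MulAut (FreeGroup α)}
    (hA1 : A (FreeGroup.of i1) = FreeGroup.of i0)
    (hA2 : ∀ j, j ≠ i0 → j ≠ i1 → A (FreeGroup.of j) = FreeGroup.of j)
    {h : FreeGroup α} (hne : h ≠ 1) (hav : Avoid i0 h) :
    ∃ C : List (ℤ ⊕ FreeGroup α), GoodL i0 C ∧
      evalL i0 C = FreeGroup.of i0 ^ (-k) * (A h * FreeGroup.of i0 ^ k) ∧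
      (∀ h' l, Sum.inr h' ∈ C → l ∈ FreeGroup.toWord h' → l.1 ≠ i0 ∧ l.1 ≠ i1) ∧
      C ≠ [] := by
  set f : α × Bool → α × Bool := fun l => (rho i0 i1 l.1, l.2) with hf
  set wa : List (α × Bool) := (FreeGroup.toWord h).map f with hwa
  have hAh : A h = FreeGroup.mk wa := by
    conv_lhs => rw [← FreeGroup.mk_toWord (x := h)]
    exact A_mk A h01 hA1 hA2 _ hav
  have hwared : IsRed wa := mapped_isRed h01 _ (isRed_toWord h) hav
  have hwai1 : ∀ l ∈ wa, l.1 ≠ i1 := by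
    intro l hl
    rw [hwa, List.mem_map] at hl
    obtain ⟨x, _, rfl⟩ := hl
    exact rho_ne_i1 h01 x.1
  obtain ⟨C₁, hC₁, hflat₁⟩ := chunk (i0 := i0) wa hwared hwai1
  have heval₁ : evalL i0 C₁ = A h := by
    rw [evalL_eq_mk hC₁, hflat₁, hAh]
  have hC₁mem : ∀ h' l, Sum.inr h' ∈ C₁ → l ∈ FreeGroup.toWord h' → l.1 ≠ i0 ∧ l.1 ≠ i1 := by
    intro h' l hmem hl
    have hv := hC₁.1 _ hmem
    refine ⟨hv.2 l hl, ?_⟩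
    exact hwai1 l (hflat₁ ▸ mem_flatten_of_inr hmem hl)
  obtain ⟨C₂, hC₂, heval₂, hsub₂⟩ := rcons (i0 := i0) k hC₁
  obtain ⟨C₃, hC₃, heval₃, hsub₃⟩ := lcons (i0 := i0) (-k) hC₂
  have heval : evalL i0 C₃ = FreeGroup.of i0 ^ (-k) * (A h * FreeGroup.of i0 ^ k) := by
    rw [heval₃, heval₂, heval₁]
  refine ⟨C₃, hC₃, heval, ?_, ?_⟩
  · intro h' l hmem hl
    exact hC₁mem h' l (hsub₂ _ (hsub₃ _ hmem)) hl
  · intro hnil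
    rw [hnil] at heval
    rw [evalL_nil] at heval
    have h2 : FreeGroup.of i0 ^ (-k) * (A h * FreeGroup.of i0 ^ k) = 1 := heval.symm
    have h4 : (FreeGroup.of i0 ^ (-k))⁻¹ = A h * FreeGroup.of i0 ^ k :=
      mul_eq_one_iff_inv_eq.1 h2
    have h5 : A h = (FreeGroup.of i0 ^ (-k))⁻¹ * (FreeGroup.of i0 ^ k)⁻¹ := by
      rw [h4]; group
    have hAh1 : A h = 1 := by rw [h5]; group
    exact hne (A.injective (by rw [hAh1, _root_.map_one]))
  
/-- The main recursion. -/
theorem Gmain (h01 : i0 ≠ i1) (hk : k ≠ 0) {A : MulAut (FreeGroup α)}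
    (hA0 : A (FreeGroup.of i0) =
      FreeGroup.of i0 ^ k * FreeGroup.of i1 * FreeGroup.of i0 ^ (-k))
    (hA1 : A (FreeGroup.of i1) = FreeGroup.of i0)
    (hA2 : ∀ j, j ≠ i0 → j ≠ i1 → A (FreeGroup.of j) = FreeGroup.of j) :
    ∀ T : List (ℤ ⊕ FreeGroup α), GoodL i0 T → T.getLast? = some (Sum.inl (-k)) →
    ∃ D, GoodL i0 D ∧ D.getLast? = some (Sum.inl (-k)) ∧
      evalL i0 D = FreeGroup.of i0 ^ (-k) * A (evalL i0 T) ∧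
      (∀ c T', T = Sum.inl c :: T' →
        ∃ h₁, D.head? = some (Sum.inr h₁) ∧
          ∀ l, (FreeGroup.toWord h₁).head? = some l → l.1 = i1) ∧
      (∀ h T', T = Sum.inr h :: T' →
        ∀ h' l, D.head? = some (Sum.inr h') → (FreeGroup.toWord h').head? = some l →
          l.1 ≠ i0 ∧ l.1 ≠ i1) := by
  intro T
  induction T with
  | nil => intro _ h; cases h
  | cons p T' ih =>
    intro hT hTlast
    rcases p with c | h
    · -- exponent piece
      cases T' with
      | nil =>
        have hc : c = -k := by
          rw [List.getLast?_singleton] at hTlast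
          cases hTlast
          rfl
        subst hc
        refine ⟨[Sum.inr (FreeGroup.of i1 ^ (-k)), Sum.inl (-k)], ⟨?_, ?_⟩, ?_, ?_, ?_, ?_⟩
        · intro q hq
          rcases List.mem_cons.1 hq with rfl | hq'
          · exact ⟨zpow_of_ne_one i1 (neg_ne_zero.2 hk), avoid_zpow_of (Ne.symm h01) _⟩
          · rcases List.mem_singleton.1 hq' with rfl
            simpa [pvalid] using neg_ne_zero.2 hk
        · simp [List.Chain']
        · simp
        · simp only [evalL, List.map_cons, List.map_nil, List.prod_cons, List.prod_nil,
            pe, Sum.elim_inl, Sum.elim_inr, id_eq, mul_one]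
          rw [A_zpow_i0 hA0]
          group
        · intro c' T'' heq
          injection heq with h1 h2
          injection h1 with h1'
          subst h1'
          refine ⟨FreeGroup.of i1 ^ (-k), rfl, ?_⟩
          intro l hl
          rw [toWord_zpow_of, List.head?_replicate,
            if_neg (fun hh => hk (by omega : k = 0))] at hl
          · cases hl; rfl
        · intro h T'' heq
          injection heq with h1 _
          cases h1
      | cons q rest =>
        have hT'ne : (q :: rest) ≠ [] := by simp
        have hT'last : (q :: rest).getLast? = some (Sum.inl (-k)) := by
          rw [getLast?_cons_ne _ hT'ne] at hTlast
          exact hTlast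
        obtain ⟨h₂, rfl⟩ : ∃ h₂, q = Sum.inr h₂ := by
          rcases q with d | h₂
          · have := (List.isChain_cons_cons.1 hT.2).1
            simp at this
          · exact ⟨h₂, rfl⟩
        obtain ⟨D', hD', hD'last, hD'eval, _, hD'head2⟩ := ih hT.tail hT'last
        have hcval : c ≠ 0 := by simpa [pvalid] using hT.1 _ (List.mem_cons_self)
        obtain ⟨E, h₁, hE, hEeval, hElast, hEhead, hEletter⟩ :=
          glue h01 hcval hD' hD'last (hD'head2 h₂ rest rfl)
        refine ⟨E, hE, hElast, ?_, ?_, ?_⟩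
        · rw [hEeval, hD'eval]
          conv_rhs => rw [evalL_cons]
          simp only [pe, Sum.elim_inl, Sum.elim_inr, id_eq]
          rw [_root_.map_mul A, A_zpow_i0 hA0]
          group
        · intro c' T'' heq
          exact ⟨h₁, hEhead, hEletter⟩
        · intro h T'' heq
          cases heq
    · -- subgroup piece
      have hT'ne : T' ≠ [] := by
        rintro rfl
        rw [List.getLast?_singleton] at hTlast
        cases hTlast
      have hT'last : T'.getLast? = some (Sum.inl (-k)) := by
        rw [getLast?_cons_ne _ hT'ne] at hTlast
        exact hTlast
      obtain ⟨c', rest, rfl⟩ : ∃ c' rest, T' = Sum.inl c' :: rest := by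
        cases T' with
        | nil => exact absurd rfl hT'ne
        | cons q rest =>
          rcases q with d | h₂
          · exact ⟨d, rest, rfl⟩
          · have := (List.isChain_cons_cons.1 hT.2).1
            simp at this
      obtain ⟨D', hD', hD'last, hD'eval, hD'head1, _⟩ := ih hT.tail hT'last
      obtain ⟨h₁, hD'head, hD'letter⟩ := hD'head1 c' rest rfl
      have hval : pvalid i0 (Sum.inr h : ℤ ⊕ FreeGroup α) :=
        hT.1 _ (List.mem_cons_self)
      obtain ⟨FC, hFC, hFCeval, hFCletters, hFCne⟩ :=
        flank_chunk h01 hk hA1 hA2 hval.1 hval.2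
      obtain ⟨E, hE, hEeval, hElast, hEhead⟩ :=
        gapp h01 hFC hFCne hFCletters hD' hD'head hD'letter hD'last
      refine ⟨E, hE, hElast, ?_, ?_, ?_⟩
      · rw [hEeval, hFCeval, hD'eval]
        conv_rhs => rw [evalL_cons]
        simp only [pe, Sum.elim_inl, Sum.elim_inr, id_eq]
        rw [_root_.map_mul A]
        group
      · intro c'' T'' heq
        cases heq
      · intro h' T'' heq
        exact fun h'' l => hEhead h'' l

end Main


/-! ### The invariant and the three steps -/

section Steps

variable {i0 i1 : α} {k : ℤ}

/-- The invariant carried through the braid word. -/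
def GoodV (i0 : α) (k : ℤ) (v : FreeGroup α) : Prop :=
  v = FreeGroup.of i0 ∨
    ∃ L : List (ℤ ⊕ FreeGroup α), GoodL i0 L ∧ L.head? = some (Sum.inl k) ∧
      L.getLast? = some (Sum.inl (-k)) ∧ evalL i0 L = v

theorem Astep (h01 : i0 ≠ i1) (hk : k ≠ 0) {A : MulAut (FreeGroup α)}
    (hA0 : A (FreeGroup.of i0) =
      FreeGroup.of i0 ^ k * FreeGroup.of i1 * FreeGroup.of i0 ^ (-k))
    (hA1 : A (FreeGroup.of i1) = FreeGroup.of i0)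
    (hA2 : ∀ j, j ≠ i0 → j ≠ i1 → A (FreeGroup.of j) = FreeGroup.of j)
    {v : FreeGroup α} (hv : GoodV i0 k v) :
    ∃ L : List (ℤ ⊕ FreeGroup α), GoodL i0 L ∧ L.head? = some (Sum.inl k) ∧
      L.getLast? = some (Sum.inl (-k)) ∧ evalL i0 L = A v := by
  rcases hv with rfl | ⟨L, hL, hLhead, hLlast, hLeval⟩
  · -- v = x1
    refine ⟨[Sum.inl k, Sum.inr (FreeGroup.of i1), Sum.inl (-k)], ⟨?_, ?_⟩, rfl, ?_, ?_⟩
    · intro q hq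
      rcases List.mem_cons.1 hq with rfl | hq'
      · simpa [pvalid] using hk
      rcases List.mem_cons.1 hq' with rfl | hq''
      · exact ⟨FreeGroup.of_ne_one i1, avoid_of (Ne.symm h01)⟩
      rcases List.mem_singleton.1 hq'' with rfl
      simpa [pvalid] using neg_ne_zero.2 hk
    · simp [List.Chain']
    · simp
    · simp only [evalL, List.map_cons, List.map_nil, List.prod_cons, List.prod_nil,
        pe, Sum.elim_inl, Sum.elim_inr, id_eq, mul_one]
      rw [hA0]
      group
  · -- v has a decomposition
    obtain ⟨T, rfl⟩ : ∃ T, L = Sum.inl k :: T := by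
      cases L with
      | nil => cases hLhead
      | cons p T => cases hLhead; exact ⟨T, rfl⟩
    have hTne : T ≠ [] := by
      rintro rfl
      rw [List.getLast?_singleton] at hLlast
      injection hLlast with h'
      injection h' with h''
      exact hk (by omega)
    have hTlast : T.getLast? = some (Sum.inl (-k)) := by
      rw [getLast?_cons_ne _ hTne] at hLlast
      exact hLlast
    obtain ⟨h₂, rest, rfl⟩ : ∃ h₂ rest, T = Sum.inr h₂ :: rest := by
      cases T with
      | nil => exact absurd rfl hTne
      | cons q rest =>
        rcases q with d | h₂
        · have := (List.isChain_cons_cons.1 hL.2).1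
          simp at this
        · exact ⟨h₂, rest, rfl⟩
    obtain ⟨D, hD, hDlast, hDeval, _, hDhead2⟩ :=
      Gmain h01 hk hA0 hA1 hA2 _ hL.tail hTlast
    obtain ⟨E, h₁, hE, hEeval, hElast, hEhead, hEletter⟩ :=
      glue h01 hk hD hDlast (hDhead2 h₂ rest rfl)
    refine ⟨Sum.inl k :: E, ⟨?_, ?_⟩, rfl, ?_, ?_⟩
    · intro q hq
      rcases List.mem_cons.1 hq with rfl | hq'
      · simpa [pvalid] using hk
      · exact hE.1 q hq'
    · refine List.isChain_cons.2 ⟨?_, hE.2⟩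
      intro y hy
      rw [hEhead] at hy
      cases hy
      simp
    · rw [getLast?_cons_ne _ (by rintro rfl; cases hEhead), hElast]
    · rw [evalL_cons, hEeval, hDeval, ← hLeval]
      conv_rhs => rw [evalL_cons]
      simp only [pe, Sum.elim_inl, Sum.elim_inr, id_eq]
      rw [_root_.map_mul A, A_zpow_i0 hA0]
      group

theorem Bstep {B : MulAut (FreeGroup α)}
    (hB0 : B (FreeGroup.of i0) = FreeGroup.of i0)
    (hBav : ∀ g, Avoid i0 g → Avoid i0 (B g))
    {v : FreeGroup α} (hv : GoodV i0 k v) : GoodV i0 k (B v) := by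
  rcases hv with rfl | ⟨L, hL, hLhead, hLlast, hLeval⟩
  · left; exact hB0
  · right
    refine ⟨L.map (Sum.map id B), ⟨?_, ?_⟩, ?_, ?_, ?_⟩
    · intro q hq
      rw [List.mem_map] at hq
      obtain ⟨p, hp, rfl⟩ := hq
      rcases p with c | h
      · simpa [pvalid, Sum.map] using hL.1 _ hp
      · have hval := hL.1 _ hp
        exact ⟨fun hc => hval.1 (B.injective (by rw [hc, _root_.map_one])),
          hBav h hval.2⟩
    · rw [List.Chain', List.isChain_map]
      refine hL.2.imp ?_
      intro p q hpq
      rcases p with c | h <;> rcases q with d | h' <;> simpa using hpq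
    · rw [List.head?_map, hLhead]; rfl
    · rw [List.getLast?_map, hLlast]; rfl
    · rw [← hLeval]
      have hfun : ∀ p : ℤ ⊕ FreeGroup α, pe i0 (Sum.map id (⇑B) p) = B (pe i0 p) := by
        intro p
        rcases p with c | h
        · show pe i0 (Sum.inl c) = B (pe i0 (Sum.inl c))
          simp only [pe, Sum.elim_inl]
          rw [map_zpow, hB0]
        · rfl
      show (List.map (pe i0) (List.map (Sum.map id ⇑B) L)).prod = B ((List.map (pe i0) L).prod)
      rw [List.map_map]
      have hcomp : (pe i0 ∘ Sum.map id ⇑B) = (fun p => B (pe i0 p)) := funext hfun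
      rw [hcomp]
      calc (List.map (fun p => B (pe i0 p)) L).prod
          = ((List.map (pe i0) L).map (⇑(B : FreeGroup α →* FreeGroup α))).prod := by
            rw [List.map_map]
            rfl
        _ = B ((List.map (pe i0) L).prod) := (map_list_prod _ _).symm

theorem avoid_aut (B : MulAut (FreeGroup α))
    (hgen : ∀ j, j ≠ i0 → Avoid i0 (B (FreeGroup.of j))) :
    ∀ g, Avoid i0 g → Avoid i0 (B g) := by
  have key : ∀ w : List (α × Bool), (∀ l ∈ w, l.1 ≠ i0) →
      Avoid i0 (B (FreeGroup.mk w)) := by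
    intro w
    induction w with
    | nil =>
      intro _
      rw [show FreeGroup.mk ([] : List (α × Bool)) = 1 from FreeGroup.one_eq_mk.symm,
        _root_.map_one]
      exact avoid_one i0
    | cons l t ih =>
      intro hw
      rw [mk_cons, _root_.map_mul B]
      refine Avoid.mul ?_ (ih fun x hx => hw x (List.mem_cons_of_mem _ hx))
      obtain ⟨j, b⟩ := l
      have hj : j ≠ i0 := hw (j, b) (List.mem_cons_self)
      cases b with
      | false =>
        rw [mk_singleton_false, _root_.map_inv B (FreeGroup.of j)]
        exact (hgen j hj).inv
      | true => exact hgen j hj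
  intro g hg
  have := key g.toWord hg
  rwa [FreeGroup.mk_toWord] at this

theorem countP_replicate_true {p : α × Bool → Bool} {a : α × Bool} (hp : p a = true) (m : ℕ) :
    (List.replicate m a).countP p = m := by
  induction m with
  | zero => rfl
  | succ m ih => rw [List.replicate_succ, List.countP_cons, ih, hp]; simp

theorem count_final (hk : k ≠ 0) {L : List (ℤ ⊕ FreeGroup α)} (hL : GoodL i0 L)
    (hLhead : L.head? = some (Sum.inl k)) (hLlast : L.getLast? = some (Sum.inl (-k))) :
    2 ≤ (evalL i0 L).toWord.countP (fun l => decide (l.1 = i0)) := by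
  obtain ⟨T, rfl⟩ : ∃ T, L = Sum.inl k :: T := by
    cases L with
    | nil => cases hLhead
    | cons p T => cases hLhead; exact ⟨T, rfl⟩
  have hTne : T ≠ [] := by
    rintro rfl
    rw [List.getLast?_singleton] at hLlast
    injection hLlast with h'
    injection h' with h''
    exact hk (by omega)
  have hTlast : T.getLast? = some (Sum.inl (-k)) := by
    rw [getLast?_cons_ne _ hTne] at hLlast
    exact hLlast
  have hmem : (Sum.inl (-k) : ℤ ⊕ FreeGroup α) ∈ T := by
    rcases mem_getLast?_eq_getLast hTlast with ⟨h', heq⟩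
    rw [heq]
    exact List.getLast_mem h'
  rw [(wordL hL).2]
  rw [List.map_cons, List.flatten_cons, List.countP_append]
  have h1 : (pw i0 (Sum.inl k : ℤ ⊕ FreeGroup α)).countP (fun l => decide (l.1 = i0))
      = k.natAbs := by
    simp only [pw, Sum.elim_inl]
    exact countP_replicate_true (by simp) _
  have h2 : k.natAbs ≤ ((T.map (pw i0)).flatten).countP (fun l => decide (l.1 = i0)) := by
    rw [List.countP_flatten, List.map_map]
    have hmem2 : (-k).natAbs ∈ T.map (List.countP (fun l => decide (l.1 = i0)) ∘ pw i0) := by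
      rw [List.mem_map]
      refine ⟨Sum.inl (-k), hmem, ?_⟩
      simp only [Function.comp_apply, pw, Sum.elim_inl]
      exact countP_replicate_true (by simp) _
    have := List.single_le_sum (l := T.map (List.countP (fun l => decide (l.1 = i0)) ∘ pw i0))
      (fun x _ => Nat.zero_le x) _ hmem2
    simpa using this
  have hk1 : 1 ≤ k.natAbs := by omega
  omega

end Steps

end WadaAux

/-- If `w` is a braid word beginning with `σ_1` and containing no occurrence of
`σ_1⁻¹`, and `σ̂` is the image of the braid represented by `w` under Wada's
representation of type (1) with nonzero parameter `k`
(`σ_i ↦ (x_i ↦ x_i^k x_{i+1} x_i^{-k}, x_{i+1} ↦ x_i)`), then the reduced word of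
`σ̂(x_1)` contains at least 2 occurrences of letters `x_1^{±1}`. -/
theorem wada_type1_sigma1_positive_two_occurrences (n : ℕ) (hn : 2 ≤ n)
    (k : ℤ) (hk : k ≠ 0)
    (φ : PresentedGroup (braidRels (n - 1)) →* MulAut (FreeGroup (Fin n)))
    (hφ : ∀ i : Fin (n - 1),
      (φ (PresentedGroup.of i)) (FreeGroup.of (xL n i)) =
          FreeGroup.of (xL n i) ^ k * FreeGroup.of (xR n i) * FreeGroup.of (xL n i) ^ (-k) ∧
      (φ (PresentedGroup.of i)) (FreeGroup.of (xR n i)) = FreeGroup.of (xL n i) ∧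
      ∀ j : Fin n, j ≠ xL n i → j ≠ xR n i →
        (φ (PresentedGroup.of i)) (FreeGroup.of j) = FreeGroup.of j)
    (w : List (Fin (n - 1) × Bool))
    (hhead : w.head? = some ((⟨0, by omega⟩ : Fin (n - 1)), true))
    (hnonneg : ∀ p ∈ w, p ≠ ((⟨0, by omega⟩ : Fin (n - 1)), false)) :
    2 ≤ ((φ (PresentedGroup.mk (braidRels (n - 1)) (FreeGroup.mk w)))
          (FreeGroup.of (⟨0, by omega⟩ : Fin n))).toWord.countP
            (fun p => decide (p.1 = (⟨0, by omega⟩ : Fin n))) := by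
  classical
  set i0 : Fin n := ⟨0, by omega⟩ with hi0def
  set i1 : Fin n := ⟨1, by omega⟩ with hi1def
  set e0 : Fin (n - 1) := ⟨0, by omega⟩ with he0def
  have h01 : i0 ≠ i1 := by
    intro h
    have := congrArg Fin.val h
    simp [hi0def, hi1def] at this
  -- the images of the generators
  have hA0 : (φ (PresentedGroup.of e0)) (FreeGroup.of i0) =
      FreeGroup.of i0 ^ k * FreeGroup.of i1 * FreeGroup.of i0 ^ (-k) := (hφ e0).1
  have hA1 : (φ (PresentedGroup.of e0)) (FreeGroup.of i1) = FreeGroup.of i0 := (hφ e0).2.1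
  have hA2 : ∀ j : Fin n, j ≠ i0 → j ≠ i1 →
      (φ (PresentedGroup.of e0)) (FreeGroup.of j) = FreeGroup.of j := fun j h1 h2 =>
    (hφ e0).2.2 j h1 h2
  -- facts about the other generators
  have hxL : ∀ j : Fin (n - 1), j ≠ e0 → xL n j ≠ i0 := by
    intro j hj hcon
    have := congrArg Fin.val hcon
    simp only [xL, hi0def] at this
    exact hj (Fin.ext (by simpa [he0def] using this))
  have hxR : ∀ j : Fin (n - 1), xR n j ≠ i0 := by
    intro j hcon
    have := congrArg Fin.val hcon
    simp [xR, hi0def] at this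
  have hB0 : ∀ j : Fin (n - 1), j ≠ e0 →
      (φ (PresentedGroup.of j)) (FreeGroup.of i0) = FreeGroup.of i0 := by
    intro j hj
    exact (hφ j).2.2 i0 (Ne.symm (hxL j hj)) (Ne.symm (hxR j))
  have hgen : ∀ j : Fin (n - 1), j ≠ e0 → ∀ m : Fin n, m ≠ i0 →
      WadaAux.Avoid i0 ((φ (PresentedGroup.of j)) (FreeGroup.of m)) := by
    intro j hj m hm
    by_cases hmL : m = xL n j
    · subst hmL
      rw [(hφ j).1]
      exact (((WadaAux.avoid_zpow_of (hxL j hj) k)).mul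
        (WadaAux.avoid_of (hxR j))).mul (WadaAux.avoid_zpow_of (hxL j hj) (-k))
    · by_cases hmR : m = xR n j
      · subst hmR
        rw [(hφ j).2.1]
        exact WadaAux.avoid_of (hxL j hj)
      · rw [(hφ j).2.2 m hmL hmR]
        exact WadaAux.avoid_of hm
  have hinv_apply : ∀ (B : MulAut (FreeGroup (Fin n))) (x y : FreeGroup (Fin n)),
      B y = x → B⁻¹ x = y := by
    intro B x y h
    rw [← h, ← MulAut.mul_apply, inv_mul_cancel]
    rfl
  have hB0' : ∀ j : Fin (n - 1), j ≠ e0 →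
      (φ (PresentedGroup.of j))⁻¹ (FreeGroup.of i0) = FreeGroup.of i0 := by
    intro j hj
    exact hinv_apply _ _ _ (hB0 j hj)
  have hgen' : ∀ j : Fin (n - 1), j ≠ e0 → ∀ m : Fin n, m ≠ i0 →
      WadaAux.Avoid i0 ((φ (PresentedGroup.of j))⁻¹ (FreeGroup.of m)) := by
    intro j hj m hm
    by_cases hmL : m = xL n j
    · subst hmL
      rw [hinv_apply _ _ _ (hφ j).2.1]
      exact WadaAux.avoid_of (hxR j)
    · by_cases hmR : m = xR n j
      · subst hmR
        have hz : (φ (PresentedGroup.of j))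
            (FreeGroup.of (xR n j) ^ (-k) * FreeGroup.of (xL n j) *
              FreeGroup.of (xR n j) ^ k) = FreeGroup.of (xR n j) := by
          rw [_root_.map_mul, _root_.map_mul, map_zpow, map_zpow, (hφ j).1, (hφ j).2.1]
          group
        rw [hinv_apply _ _ _ hz]
        exact ((WadaAux.avoid_zpow_of (hxR j) (-k)).mul
          (WadaAux.avoid_of (hxL j hj))).mul (WadaAux.avoid_zpow_of (hxR j) k)
      · rw [hinv_apply _ _ _ ((hφ j).2.2 m hmL hmR)]
        exact WadaAux.avoid_of hm
  -- the inner induction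
  have main : ∀ u : List (Fin (n - 1) × Bool), (∀ p ∈ u, p ≠ (e0, false)) →
      WadaAux.GoodV i0 k
        ((φ (PresentedGroup.mk (braidRels (n - 1)) (FreeGroup.mk u))) (FreeGroup.of i0)) := by
    intro u
    induction u with
    | nil =>
      intro _
      left
      rw [show FreeGroup.mk ([] : List (Fin (n - 1) × Bool)) = 1 from
        FreeGroup.one_eq_mk.symm, _root_.map_one, _root_.map_one]
      rfl
    | cons p u ih =>
      intro hu
      obtain ⟨j, b⟩ := p
      have ihres := ih fun q hq => hu q (List.mem_cons_of_mem _ hq)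
      have hsplit : (φ (PresentedGroup.mk (braidRels (n - 1))
            (FreeGroup.mk ((j, b) :: u)))) (FreeGroup.of i0)
          = (φ (PresentedGroup.mk (braidRels (n - 1)) (FreeGroup.mk [(j, b)])))
            ((φ (PresentedGroup.mk (braidRels (n - 1)) (FreeGroup.mk u)))
              (FreeGroup.of i0)) := by
        rw [WadaAux.mk_cons, _root_.map_mul, _root_.map_mul, MulAut.mul_apply]
      rw [hsplit]
      cases b with
      | true =>
        have hform : (φ (PresentedGroup.mk (braidRels (n - 1)) (FreeGroup.mk [(j, true)])))
            = φ (PresentedGroup.of j) := rfl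
        rw [hform]
        by_cases hj : j = e0
        · subst hj
          obtain ⟨L, h1, h2, h3, h4⟩ := WadaAux.Astep h01 hk hA0 hA1 hA2 ihres
          exact Or.inr ⟨L, h1, h2, h3, h4⟩
        · exact WadaAux.Bstep (hB0 j hj)
            (WadaAux.avoid_aut _ (fun m hm => hgen j hj m hm)) ihres
      | false =>
        have hj : j ≠ e0 := by
          intro h
          exact hu (j, false) (List.mem_cons_self) (by rw [h])
        have hform : (φ (PresentedGroup.mk (braidRels (n - 1)) (FreeGroup.mk [(j, false)])))
            = (φ (PresentedGroup.of j))⁻¹ := by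
          rw [WadaAux.mk_singleton_false, _root_.map_inv, _root_.map_inv]
          rfl
        rw [hform]
        exact WadaAux.Bstep (hB0' j hj)
          (WadaAux.avoid_aut _ (fun m hm => hgen' j hj m hm)) ihres
  -- finish
  obtain ⟨u, rfl⟩ : ∃ u, w = (e0, true) :: u := by
    cases w with
    | nil => cases hhead
    | cons p u =>
      simp only [List.head?_cons, Option.some.injEq] at hhead
      exact ⟨u, by rw [hhead]⟩
  have hu : ∀ p ∈ u, p ≠ (e0, false) := fun p hp =>
    hnonneg p (List.mem_cons_of_mem _ hp)
  have hsplitw : (φ (PresentedGroup.mk (braidRels (n - 1))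
        (FreeGroup.mk ((e0, true) :: u)))) (FreeGroup.of i0)
      = (φ (PresentedGroup.of e0))
        ((φ (PresentedGroup.mk (braidRels (n - 1)) (FreeGroup.mk u)))
          (FreeGroup.of i0)) := by
    rw [WadaAux.mk_cons, _root_.map_mul, _root_.map_mul, MulAut.mul_apply]
    rfl
  obtain ⟨L, h1, h2, h3, h4⟩ := WadaAux.Astep h01 hk hA0 hA1 hA2 (main u hu)
  show 2 ≤ ((φ (PresentedGroup.mk (braidRels (n - 1))
      (FreeGroup.mk ((e0, true) :: u)))) (FreeGroup.of i0)).toWord.countP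
        (fun p => decide (p.1 = i0))
  rw [hsplitw, ← h4]
  exact WadaAux.count_final hk h1 h2 h3
end

section
/- Let n ≥ 2 and let k, s be nonzero integers with |k| ≠ |s|. Then the images φ_k(B_n) and φ_s(B_n) of Wada's representations of type (1) with parameters k and s are different subgroups of Aut(F_n). -/
noncomputable section WadaAux

open Complex

/-- The affine map `z ↦ a z + b` as a permutation of `ℂ`. -/
def aff (a : ℂˣ) (b : ℂ) : Equiv.Perm ℂ where
  toFun z := a * z + b
  invFun z := (a⁻¹ : ℂˣ) * (z - b)
  left_inv z := by
    field_simp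
    simp
  right_inv z := by
    field_simp
    simp

@[simp] lemma aff_apply (a : ℂˣ) (b z : ℂ) : aff a b z = a * z + b := rfl

lemma aff_mul (a a' : ℂˣ) (b b' : ℂ) :
    aff a b * aff a' b' = aff (a * a') ((a : ℂ) * b' + b) := by
  ext z
  simp [aff, Equiv.Perm.mul_apply]
  ring

lemma aff_one : aff 1 0 = 1 := by
  ext z; simp [aff]

lemma aff_inv (a : ℂˣ) (b : ℂ) :
    (aff a b)⁻¹ = aff a⁻¹ (-(((a⁻¹ : ℂˣ) : ℂ) * b)) := by
  symm
  apply eq_inv_of_mul_eq_one_right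
  rw [aff_mul]
  simp [aff_one, Units.val_inv_eq_inv_val, mul_inv_cancel₀ a.ne_zero]

lemma aff_zpow (a : ℂˣ) (b : ℂ) (m : ℤ) :
    ∃ c : ℂ, (aff a b) ^ m = aff (a ^ m) c ∧
      (1 - (a : ℂ)) * c = (1 - (a : ℂ) ^ m) * b := by
  induction m using Int.induction_on with
  | zero => exact ⟨0, by simp [aff_one], by simp⟩
  | succ i ih =>
    obtain ⟨c, h1, h2⟩ := ih
    refine ⟨(a : ℂ) ^ (i : ℤ) * b + c, ?_, ?_⟩
    · rw [zpow_add_one, h1, aff_mul]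
      congr 1
      all_goals first
        | exact (zpow_add_one a (i : ℤ)).symm
        | rw [Units.val_zpow_eq_zpow_val]
    · rw [zpow_add_one₀ a.ne_zero]
      linear_combination h2
  | pred i ih =>
    obtain ⟨c, h1, h2⟩ := ih
    refine ⟨-(a : ℂ) ^ (-(i : ℤ) - 1) * b + c, ?_, ?_⟩
    · rw [zpow_sub_one, h1, aff_inv, aff_mul]
      congr 1
      all_goals first
        | exact (zpow_sub_one a (-(i : ℤ))).symm
        | (rw [Units.val_zpow_eq_zpow_val, Units.val_inv_eq_inv_val,
            zpow_sub_one₀ a.ne_zero]; ring)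
    · rw [zpow_sub_one₀ a.ne_zero]
      linear_combination h2 + ((a : ℂ) ^ (-(i : ℤ)) * b) * inv_mul_cancel₀ a.ne_zero

/-- Evaluation homomorphism `F_n → Perm ℂ` sending `x_j` to `z ↦ ζ z + v j`. -/
def theta (n : ℕ) (ζ : ℂˣ) (v : Fin n → ℂ) : FreeGroup (Fin n) →* Equiv.Perm ℂ :=
  FreeGroup.lift fun j => aff ζ (v j)

@[simp] lemma theta_of (n : ℕ) (ζ : ℂˣ) (v : Fin n → ℂ) (j : Fin n) :
    theta n ζ v (FreeGroup.of j) = aff ζ (v j) :=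
  FreeGroup.lift_apply_of

/-- The subgroup of automorphisms of `F_n` acting on the `theta`s by permuting the `v j`. -/
def wadaS (n : ℕ) (ζ : ℂˣ) : Subgroup (MulAut (FreeGroup (Fin n))) where
  carrier := {α | ∃ σ : Equiv.Perm (Fin n), ∀ v : Fin n → ℂ,
    (theta n ζ v).comp α.toMonoidHom = theta n ζ (fun j => v (σ j))}
  one_mem' := ⟨1, fun v => by ext j; simp⟩
  mul_mem' := by
    rintro α β ⟨σa, ha⟩ ⟨σb, hb⟩
    refine ⟨σb.trans σa, fun v => ?_⟩
    refine MonoidHom.ext fun x => ?_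
    have h1 := DFunLike.congr_fun (ha v) (β x)
    have h2 := DFunLike.congr_fun (hb (fun j => v (σa j))) x
    simpa using h1.trans h2
  inv_mem' := by
    rintro α ⟨σ, h⟩
    refine ⟨σ.symm, fun v => ?_⟩
    refine MonoidHom.ext fun x => ?_
    have h1 := DFunLike.congr_fun (h (fun j => v (σ.symm j))) (α⁻¹ x)
    simp only [MonoidHom.comp_apply, MulEquiv.coe_toMonoidHom] at h1 ⊢
    have : α (α⁻¹ x) = x := by simp
    rw [this] at h1
    have h2 : (fun j => v ((Equiv.symm σ) (σ j))) = v := by funext j; simp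
    rw [h2] at h1
    exact h1.symm

/-- Scaling maps as a homomorphism. -/
def affHom : ℂˣ →* Equiv.Perm ℂ where
  toFun a := aff a 0
  map_one' := aff_one
  map_mul' a b := by rw [aff_mul, mul_zero, add_zero]

lemma wada_range_le_dvd (n : ℕ) (hn : 2 ≤ n) (k s : ℤ) (hs : s ≠ 0)
    (φ ψ : PresentedGroup (braidRels (n - 1)) →* MulAut (FreeGroup (Fin n)))
    (hφ : ∀ i : Fin (n - 1),
      (φ (PresentedGroup.of i)) (FreeGroup.of (xL n i)) =
          FreeGroup.of (xL n i) ^ k * FreeGroup.of (xR n i) * FreeGroup.of (xL n i) ^ (-k) ∧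
      (φ (PresentedGroup.of i)) (FreeGroup.of (xR n i)) = FreeGroup.of (xL n i) ∧
      ∀ j : Fin n, j ≠ xL n i → j ≠ xR n i →
        (φ (PresentedGroup.of i)) (FreeGroup.of j) = FreeGroup.of j)
    (hψ : ∀ i : Fin (n - 1),
      (ψ (PresentedGroup.of i)) (FreeGroup.of (xL n i)) =
          FreeGroup.of (xL n i) ^ s * FreeGroup.of (xR n i) * FreeGroup.of (xL n i) ^ (-s) ∧
      (ψ (PresentedGroup.of i)) (FreeGroup.of (xR n i)) = FreeGroup.of (xL n i) ∧
      ∀ j : Fin n, j ≠ xL n i → j ≠ xR n i →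
        (ψ (PresentedGroup.of i)) (FreeGroup.of j) = FreeGroup.of j)
    (hle : φ.range ≤ ψ.range) : (s.natAbs : ℤ) ∣ k := by
  set m : ℕ := s.natAbs with hm
  have hm0 : m ≠ 0 := Int.natAbs_ne_zero.mpr hs
  have hprim : IsPrimitiveRoot (Complex.exp (2 * Real.pi * Complex.I / m)) m :=
    Complex.isPrimitiveRoot_exp m hm0
  set ζc : ℂ := Complex.exp (2 * Real.pi * Complex.I / m) with hζc
  have hζ0 : ζc ≠ 0 := Complex.exp_ne_zero _
  set ζ : ℂˣ := Units.mk0 ζc hζ0 with hζ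
  have hζval : (ζ : ℂ) = ζc := rfl
  have hζs : (ζ : ℂ) ^ s = 1 := by
    rcases Int.natAbs_eq s with h | h
    · rw [h, ← hm, hζval]; exact hprim.zpow_eq_one
    · rw [h, ← hm, zpow_neg, hζval, hprim.zpow_eq_one, inv_one]
  have hζu : ζ ^ s = 1 := by
    apply Units.ext
    rw [Units.val_zpow_eq_zpow_val, hζs, Units.val_one]
  -- every ψ-image lies in `wadaS n ζ`
  have hall : ∀ x, ψ x ∈ wadaS n ζ := by
    intro x
    refine PresentedGroup.generated_by (braidRels (n-1)) ((wadaS n ζ).comap ψ) ?_ x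
    intro i
    refine ⟨Equiv.swap (xL n i) (xR n i), fun v => ?_⟩
    refine FreeGroup.ext_hom _ _ fun j => ?_
    simp only [MonoidHom.comp_apply, MulEquiv.coe_toMonoidHom, theta_of]
    by_cases h1 : j = xL n i
    · subst h1
      rw [(hψ i).1]
      obtain ⟨c, hgs, hc⟩ := aff_zpow ζ (v (xL n i)) s
      rw [hζs, sub_self, zero_mul] at hc
      rw [map_mul, map_mul, map_zpow, map_zpow, theta_of, theta_of, zpow_neg, hgs, hζu,
        aff_inv, aff_mul, aff_mul, Equiv.swap_apply_left]
      refine Equiv.ext fun z => ?_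
      simp only [aff_apply, Units.val_mul, Units.val_one, inv_one, one_mul, mul_one,
        hζ, Units.val_mk0] at hc ⊢
      linear_combination hc
    · by_cases h2 : j = xR n i
      · subst h2
        rw [(hψ i).2.1, theta_of, Equiv.swap_apply_right]
      · rw [(hψ i).2.2 j h1 h2, theta_of, Equiv.swap_apply_of_ne_of_ne h1 h2]
  -- extract the permutation for `φ (of i0)`
  have hn1 : 0 < n - 1 := by omega
  set i0 : Fin (n - 1) := ⟨0, hn1⟩ with hi0
  have hmem : φ (PresentedGroup.of i0) ∈ wadaS n ζ := by
    obtain ⟨w, hw⟩ := hle ⟨PresentedGroup.of i0, rfl⟩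
    rw [← hw]; exact hall w
  obtain ⟨σ, hσ⟩ := hmem
  set v : Fin n → ℂ := fun j => if j = xR n i0 then 1 else 0 with hv
  have hne : xL n i0 ≠ xR n i0 := by
    simp [xL, xR, Fin.ext_iff, hi0]
  have hvL : v (xL n i0) = 0 := by simp [hv, hne]
  have hvR : v (xR n i0) = 1 := by simp [hv]
  have key := DFunLike.congr_fun (hσ v) (FreeGroup.of (xL n i0))
  simp only [MonoidHom.comp_apply, MulEquiv.coe_toMonoidHom, theta_of] at key
  rw [(hφ i0).1, map_mul, map_mul, map_zpow, map_zpow, theta_of, theta_of, hvL, hvR] at key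
  have hpow : ∀ l : ℤ, (aff ζ 0) ^ l = aff (ζ ^ l) 0 := fun l => (map_zpow affHom ζ l).symm
  rw [hpow, hpow] at key
  have key2 := DFunLike.congr_fun key (0 : ℂ)
  simp only [Equiv.Perm.mul_apply, aff_apply, Units.val_zpow_eq_zpow_val, hζval,
    mul_zero, add_zero, zero_add, mul_one] at key2
  -- key2 : ζc ^ k * (ζc * (ζc^(-k) * 0 + 0) + 1) + 0 = ... simplifies
  have hzk : ζc ^ k = v (σ (xL n i0)) := by linear_combination key2
  by_cases hσx : σ (xL n i0) = xR n i0
  · rw [hσx, hvR] at hzk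
    exact (hprim.zpow_eq_one_iff_dvd k).mp hzk
  · exfalso
    have : v (σ (xL n i0)) = 0 := by simp [hv, hσx]
    rw [this] at hzk
    exact zpow_ne_zero k hζ0 hzk

end WadaAux

/-- For `n ≥ 2` and nonzero integers `k, s` with `|k| ≠ |s|`, the images of Wada's
type (1) representations `φ_k` and `φ_s` of `B_n` are different subgroups of
`Aut(F_n)`. -/
theorem wada_type1_images_distinct (n : ℕ) (hn : 2 ≤ n) (k s : ℤ)
    (hk : k ≠ 0) (hs : s ≠ 0) (hks : k.natAbs ≠ s.natAbs)
    (φ ψ : PresentedGroup (braidRels (n - 1)) →* MulAut (FreeGroup (Fin n)))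
    (hφ : ∀ i : Fin (n - 1),
      (φ (PresentedGroup.of i)) (FreeGroup.of (xL n i)) =
          FreeGroup.of (xL n i) ^ k * FreeGroup.of (xR n i) * FreeGroup.of (xL n i) ^ (-k) ∧
      (φ (PresentedGroup.of i)) (FreeGroup.of (xR n i)) = FreeGroup.of (xL n i) ∧
      ∀ j : Fin n, j ≠ xL n i → j ≠ xR n i →
        (φ (PresentedGroup.of i)) (FreeGroup.of j) = FreeGroup.of j)
    (hψ : ∀ i : Fin (n - 1),
      (ψ (PresentedGroup.of i)) (FreeGroup.of (xL n i)) =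
          FreeGroup.of (xL n i) ^ s * FreeGroup.of (xR n i) * FreeGroup.of (xL n i) ^ (-s) ∧
      (ψ (PresentedGroup.of i)) (FreeGroup.of (xR n i)) = FreeGroup.of (xL n i) ∧
      ∀ j : Fin n, j ≠ xL n i → j ≠ xR n i →
        (ψ (PresentedGroup.of i)) (FreeGroup.of j) = FreeGroup.of j) :
    φ.range ≠ ψ.range := by
  intro heq
  have h1 := wada_range_le_dvd n hn k s hs φ ψ hφ hψ (le_of_eq heq)
  have h2 := wada_range_le_dvd n hn s k hk ψ φ hψ hφ (le_of_eq heq.symm)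
  apply hks
  have d1 : s.natAbs ∣ k.natAbs := Int.natAbs_dvd_natAbs.mpr (Int.natAbs_dvd.mp h1)
  have d2 : k.natAbs ∣ s.natAbs := Int.natAbs_dvd_natAbs.mpr (Int.natAbs_dvd.mp h2)
  exact Nat.dvd_antisymm d2 d1
end
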